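/- arXiv:1512.06371 — 5 statements merged into one kernel-verified Lean document; each statement's English description precedes it below -/
import Mathlib

section
/- For every simple graph G on the positive integers that contains no increasing path of length 4 (no vertices i_1 < i_2 < i_3 < i_4 < i_5 with i_j adjacent to i_{j+1} for 1 ≤ j ≤ 4), the limit inferior as n → ∞ of e(G_n)/n² is at most 1/4. -/
open Filter

/-- `G` contains an increasing path of length `k`: vertices
`i₁ < i₂ < ⋯ < i_{k+1}` (all positive integers) with consecutive vertices adjacent. -/
def HasIncPath (G : SimpleGraph ℕ) (k : ℕ) : Prop :=
  ∃ f : Fin (k + 1) → ℕ, (∀ i, 1 ≤ f i) ∧ StrictMono f ∧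
    ∀ i : Fin k, G.Adj (f i.castSucc) (f i.succ)

/-- `e(G_n)`: the number of edges of the subgraph of `G` induced by `{1, …, n}`. -/
noncomputable def edgeCount (G : SimpleGraph ℕ) (n : ℕ) : ℕ :=
  {p : ℕ × ℕ | 1 ≤ p.1 ∧ p.1 < p.2 ∧ p.2 ≤ n ∧ G.Adj p.1 p.2}.ncard

open Finset


def PathEnd (G : SimpleGraph ℕ) (v k : ℕ) : Prop :=
  ∃ f : Fin (k + 1) → ℕ, (∀ i, 1 ≤ f i) ∧ StrictMono f ∧
    (∀ i : Fin k, G.Adj (f i.castSucc) (f i.succ)) ∧ f (Fin.last k) = v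

open Classical in
noncomputable def aCol (G : SimpleGraph ℕ) (v : ℕ) : ℕ :=
  if PathEnd G v 3 then 3 else if PathEnd G v 2 then 2 else if PathEnd G v 1 then 1 else 0

lemma aCol_le_three (G : SimpleGraph ℕ) (v : ℕ) : aCol G v ≤ 3 := by
  unfold aCol; split_ifs <;> omega

lemma pathEnd_zero (G : SimpleGraph ℕ) {v : ℕ} (hv : 1 ≤ v) : PathEnd G v 0 := by
  refine ⟨fun _ => v, fun _ => hv, ?_, fun i => i.elim0, rfl⟩
  intro a b hab
  have ha := a.isLt
  have hb := b.isLt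
  exact absurd (Fin.ext (by omega : (a:ℕ) = b)) hab.ne

lemma pathEnd_succ (G : SimpleGraph ℕ) {u v k : ℕ} (huv : u < v) (hadj : G.Adj u v)
    (h : PathEnd G u k) : PathEnd G v (k + 1) := by
  obtain ⟨f, hpos, hmono, hadjf, hlast⟩ := h
  refine ⟨Fin.snoc f v, ?_, ?_, ?_, ?_⟩
  · intro i
    refine Fin.lastCases ?_ ?_ i
    · have hv : 1 ≤ v := le_trans (hlast ▸ hpos (Fin.last k)) huv.le
      simpa using hv
    · intro j; simpa using hpos j
  · rw [Fin.strictMono_iff_lt_succ]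
    intro i
    refine Fin.lastCases ?_ ?_ i
    · have h1 : (Fin.last k).succ = Fin.last (k+1) := rfl
      rw [h1, Fin.snoc_last, Fin.snoc_castSucc, hlast]
      exact huv
    · intro j
      rw [Fin.succ_castSucc, Fin.snoc_castSucc, Fin.snoc_castSucc]
      exact hmono (Fin.castSucc_lt_succ : j.castSucc < j.succ)
  · intro i
    refine Fin.lastCases ?_ ?_ i
    · have h1 : (Fin.last k).succ = Fin.last (k+1) := rfl
      rw [h1, Fin.snoc_last, Fin.snoc_castSucc, hlast]
      exact hadj
    · intro j
      rw [Fin.succ_castSucc, Fin.snoc_castSucc, Fin.snoc_castSucc]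
      exact hadjf j
  · simp

lemma pathEnd_aCol (G : SimpleGraph ℕ) {v : ℕ} (hv : 1 ≤ v) : PathEnd G v (aCol G v) := by
  unfold aCol
  split_ifs with h3 h2 h1
  · exact h3
  · exact h2
  · exact h1
  · exact pathEnd_zero G hv

lemma le_aCol (G : SimpleGraph ℕ) {v k : ℕ} (h : PathEnd G v k) (hk : k ≤ 3) :
    k ≤ aCol G v := by
  unfold aCol
  split_ifs with h3 h2 h1
  · omega
  · interval_cases k <;> first | omega | exact absurd h (by assumption)
  · interval_cases k <;> first | omega | exact absurd h (by assumption)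
  · interval_cases k <;> first | omega | exact absurd h (by assumption)

lemma aCol_lt_of_adj (G : SimpleGraph ℕ) (hG : ¬ HasIncPath G 4) {u v : ℕ}
    (hu : 1 ≤ u) (huv : u < v) (hadj : G.Adj u v) : aCol G u < aCol G v := by
  have hP : PathEnd G v (aCol G u + 1) := pathEnd_succ G huv hadj (pathEnd_aCol G hu)
  have h3 := aCol_le_three G u
  by_cases hcase : aCol G u = 3
  · exfalso
    apply hG
    rw [hcase] at hP
    obtain ⟨f, h1, h2, h3', _⟩ := hP
    exact ⟨f, h1, h2, h3'⟩
  · have := le_aCol G hP (by omega)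
    omega


noncomputable def cnt (G : SimpleGraph ℕ) (i n : ℕ) : ℕ :=
  ((Finset.Icc 1 n).filter (fun v => aCol G v = i)).card

noncomputable def bw (G : SimpleGraph ℕ) (i t : ℕ) : ℕ :=
  ((Finset.Ioc t (2*t)).filter (fun v => aCol G v = i)).card

noncomputable def pairF (G : SimpleGraph ℕ) (n : ℕ) : Finset (ℕ × ℕ) :=
  ((Finset.Icc 1 n) ×ˢ (Finset.Icc 1 n)).filter
    (fun p => p.1 < p.2 ∧ aCol G p.1 < aCol G p.2)

noncomputable def incP (G : SimpleGraph ℕ) (n : ℕ) : ℕ := (pairF G n).card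

lemma fourSplit (G : SimpleGraph ℕ) (s : Finset ℕ) :
    s.card = (s.filter (fun v => aCol G v = 0)).card + (s.filter (fun v => aCol G v = 1)).card
      + (s.filter (fun v => aCol G v = 2)).card + (s.filter (fun v => aCol G v = 3)).card := by
  have h := Finset.card_eq_sum_card_fiberwise (s := s) (t := Finset.range 4) (f := aCol G)
    (fun x _ => Finset.mem_range.mpr (by have := aCol_le_three G x; omega))
  simp [Finset.sum_range_succ] at h
  omega

lemma cnt_sum (G : SimpleGraph ℕ) (n : ℕ) :
    cnt G 0 n + cnt G 1 n + cnt G 2 n + cnt G 3 n = n := by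
  have h := fourSplit G (Finset.Icc 1 n)
  simp only [Nat.card_Icc] at h
  unfold cnt
  omega

lemma bw_sum (G : SimpleGraph ℕ) (t : ℕ) :
    bw G 0 t + bw G 1 t + bw G 2 t + bw G 3 t = t := by
  have h := fourSplit G (Finset.Ioc t (2*t))
  simp only [Nat.card_Ioc] at h
  unfold bw
  omega

lemma cnt_double (G : SimpleGraph ℕ) (i t : ℕ) (ht : 1 ≤ t) :
    cnt G i (2*t) = cnt G i t + bw G i t := by
  have hunion : Finset.Icc 1 (2*t) = Finset.Icc 1 t ∪ Finset.Ioc t (2*t) := by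
    ext x
    simp only [Finset.mem_Icc, Finset.mem_Ioc, Finset.mem_union]
    omega
  have hdisj : Disjoint ((Finset.Icc 1 t).filter (fun v => aCol G v = i))
      ((Finset.Ioc t (2*t)).filter (fun v => aCol G v = i)) := by
    rw [Finset.disjoint_left]
    intro x hx1 hx2
    simp only [Finset.mem_filter, Finset.mem_Icc, Finset.mem_Ioc] at hx1 hx2
    omega
  unfold cnt bw
  rw [hunion, Finset.filter_union, Finset.card_union_of_disjoint hdisj]

lemma incP_le (G : SimpleGraph ℕ) (n : ℕ) : incP G n ≤ n * n := by
  unfold incP pairF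
  calc _ ≤ ((Finset.Icc 1 n) ×ˢ (Finset.Icc 1 n)).card := Finset.card_filter_le _ _
    _ = n * n := by rw [Finset.card_product]; simp [Nat.card_Icc]

lemma window (G : SimpleGraph ℕ) (t : ℕ) (ht : 1 ≤ t) :
    incP G (2*t) ≤ incP G t
      + (cnt G 0 t * bw G 1 t + (cnt G 0 t + cnt G 1 t) * bw G 2 t
         + (cnt G 0 t + cnt G 1 t + cnt G 2 t) * bw G 3 t)
      + (bw G 0 t * bw G 1 t + bw G 0 t * bw G 2 t + bw G 0 t * bw G 3 t
         + bw G 1 t * bw G 2 t + bw G 1 t * bw G 3 t + bw G 2 t * bw G 3 t) := by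
  classical
  set S := pairF G (2*t) with hS
  set B : ℕ → Finset ℕ := fun j => (Finset.Ioc t (2*t)).filter (fun v => aCol G v = j) with hB
  set C : ℕ → Finset ℕ := fun j => (Finset.Icc 1 t).filter (fun v => aCol G v = j) with hC
  set Low : ℕ → Finset ℕ := fun j => (Finset.Icc 1 t).filter (fun u => aCol G u < j) with hLow
  set T := S.filter (fun p => ¬ p.2 ≤ t) with hT
  have hsplit1 : (S.filter (fun p => p.2 ≤ t)).card + T.card = S.card := by
    rw [hT]; exact Finset.card_filter_add_card_filter_not _
  have hsplit2 : (T.filter (fun p => p.1 ≤ t)).card + (T.filter (fun p => ¬ p.1 ≤ t)).card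
      = T.card := Finset.card_filter_add_card_filter_not _
  -- part 1 : pairs with p.2 ≤ t
  have h1 : S.filter (fun p => p.2 ≤ t) = pairF G t := by
    ext ⟨u, v⟩
    simp only [hS, pairF, Finset.mem_filter, Finset.mem_product, Finset.mem_Icc]
    omega
  -- cross pairs
  have hCross : T.filter (fun p => p.1 ≤ t) ⊆
      (Low 1 ×ˢ B 1) ∪ (Low 2 ×ˢ B 2) ∪ (Low 3 ×ˢ B 3) := by
    rintro ⟨u, v⟩ hp
    simp only [hT, hS, pairF, Finset.mem_filter, Finset.mem_product, Finset.mem_Icc] at hp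
    obtain ⟨⟨⟨⟨⟨hu1, hu2⟩, hv1, hv2⟩, huv, hcol⟩, hvt⟩, hut⟩ := hp
    have h3v := aCol_le_three G v
    simp only [Finset.mem_union, Finset.mem_product, hLow, hB, Finset.mem_filter,
      Finset.mem_Icc, Finset.mem_Ioc]
    omega
  -- window pairs
  have hWin : T.filter (fun p => ¬ p.1 ≤ t) ⊆
      (B 0 ×ˢ B 1) ∪ (B 0 ×ˢ B 2) ∪ (B 0 ×ˢ B 3) ∪ (B 1 ×ˢ B 2) ∪ (B 1 ×ˢ B 3)
        ∪ (B 2 ×ˢ B 3) := by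
    rintro ⟨u, v⟩ hp
    simp only [hT, hS, pairF, Finset.mem_filter, Finset.mem_product, Finset.mem_Icc] at hp
    obtain ⟨⟨⟨⟨⟨hu1, hu2⟩, hv1, hv2⟩, huv, hcol⟩, hvt⟩, hut⟩ := hp
    have h3v := aCol_le_three G v
    have h3u := aCol_le_three G u
    simp only [Finset.mem_union, Finset.mem_product, hB, Finset.mem_filter, Finset.mem_Ioc]
    omega
  -- low counts
  have hL1 : (Low 1).card = cnt G 0 t := by
    unfold cnt
    congr 1
    apply Finset.filter_congr
    intro x _
    constructor <;> (intro h; omega)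
  have hL2 : (Low 2).card = cnt G 0 t + cnt G 1 t := by
    have he : Low 2 = C 0 ∪ C 1 := by
      ext x
      simp only [hLow, hC, Finset.mem_filter, Finset.mem_union, Finset.mem_Icc]
      constructor
      · rintro ⟨hx, hc⟩; omega
      · rintro (⟨hx, hc⟩ | ⟨hx, hc⟩) <;> exact ⟨hx, by omega⟩
    have hd : Disjoint (C 0) (C 1) := by
      rw [Finset.disjoint_left]; intro x h1 h2
      simp only [hC, Finset.mem_filter] at h1 h2; omega
    rw [he, Finset.card_union_of_disjoint hd]; rfl
  have hL3 : (Low 3).card = cnt G 0 t + cnt G 1 t + cnt G 2 t := by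
    have he : Low 3 = C 0 ∪ C 1 ∪ C 2 := by
      ext x
      simp only [hLow, hC, Finset.mem_filter, Finset.mem_union, Finset.mem_Icc]
      constructor
      · rintro ⟨hx, hc⟩; omega
      · rintro ((⟨hx, hc⟩ | ⟨hx, hc⟩) | ⟨hx, hc⟩) <;> exact ⟨hx, by omega⟩
    have hd1 : Disjoint (C 0) (C 1) := by
      rw [Finset.disjoint_left]; intro x h1 h2
      simp only [hC, Finset.mem_filter] at h1 h2; omega
    have hd2 : Disjoint (C 0 ∪ C 1) (C 2) := by
      rw [Finset.disjoint_left]; intro x h1 h2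
      simp only [hC, Finset.mem_union, Finset.mem_filter] at h1 h2; omega
    rw [he, Finset.card_union_of_disjoint hd2, Finset.card_union_of_disjoint hd1]; rfl
  have hBc : ∀ j, (B j).card = bw G j t := fun j => rfl
  -- assemble
  have hCrossCard : (T.filter (fun p => p.1 ≤ t)).card ≤
      cnt G 0 t * bw G 1 t + (cnt G 0 t + cnt G 1 t) * bw G 2 t
        + (cnt G 0 t + cnt G 1 t + cnt G 2 t) * bw G 3 t := by
    calc (T.filter (fun p => p.1 ≤ t)).card
        ≤ ((Low 1 ×ˢ B 1) ∪ (Low 2 ×ˢ B 2) ∪ (Low 3 ×ˢ B 3)).card := Finset.card_le_card hCross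
      _ ≤ ((Low 1 ×ˢ B 1) ∪ (Low 2 ×ˢ B 2)).card + (Low 3 ×ˢ B 3).card := Finset.card_union_le _ _
      _ ≤ (Low 1 ×ˢ B 1).card + (Low 2 ×ˢ B 2).card + (Low 3 ×ˢ B 3).card := by
          have := Finset.card_union_le (Low 1 ×ˢ B 1) (Low 2 ×ˢ B 2); omega
      _ = _ := by
          rw [Finset.card_product, Finset.card_product, Finset.card_product, hL1, hL2, hL3,
            hBc 1, hBc 2, hBc 3]
  have hWinCard : (T.filter (fun p => ¬ p.1 ≤ t)).card ≤
      bw G 0 t * bw G 1 t + bw G 0 t * bw G 2 t + bw G 0 t * bw G 3 t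
        + bw G 1 t * bw G 2 t + bw G 1 t * bw G 3 t + bw G 2 t * bw G 3 t := by
    have h1 := Finset.card_le_card hWin
    have h2 := Finset.card_union_le ((B 0 ×ˢ B 1) ∪ (B 0 ×ˢ B 2) ∪ (B 0 ×ˢ B 3) ∪ (B 1 ×ˢ B 2)
      ∪ (B 1 ×ˢ B 3)) (B 2 ×ˢ B 3)
    have h3 := Finset.card_union_le ((B 0 ×ˢ B 1) ∪ (B 0 ×ˢ B 2) ∪ (B 0 ×ˢ B 3) ∪ (B 1 ×ˢ B 2))
      (B 1 ×ˢ B 3)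
    have h4 := Finset.card_union_le ((B 0 ×ˢ B 1) ∪ (B 0 ×ˢ B 2) ∪ (B 0 ×ˢ B 3)) (B 1 ×ˢ B 2)
    have h5 := Finset.card_union_le ((B 0 ×ˢ B 1) ∪ (B 0 ×ˢ B 2)) (B 0 ×ˢ B 3)
    have h6 := Finset.card_union_le (B 0 ×ˢ B 1) (B 0 ×ˢ B 2)
    have e1 : (B 0 ×ˢ B 1).card = bw G 0 t * bw G 1 t := by rw [Finset.card_product]; rfl
    have e2 : (B 0 ×ˢ B 2).card = bw G 0 t * bw G 2 t := by rw [Finset.card_product]; rfl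
    have e3 : (B 0 ×ˢ B 3).card = bw G 0 t * bw G 3 t := by rw [Finset.card_product]; rfl
    have e4 : (B 1 ×ˢ B 2).card = bw G 1 t * bw G 2 t := by rw [Finset.card_product]; rfl
    have e5 : (B 1 ×ˢ B 3).card = bw G 1 t * bw G 3 t := by rw [Finset.card_product]; rfl
    have e6 : (B 2 ×ˢ B 3).card = bw G 2 t * bw G 3 t := by rw [Finset.card_product]; rfl
    omega
  have e0 : (S.filter (fun p => p.2 ≤ t)).card = incP G t := by rw [h1]; rfl
  have efin : incP G (2*t) = S.card := rfl
  omega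


noncomputable def Vq (y0 y1 y2 y3 : ℝ) : ℝ :=
  -(3/2)*(y0*y1 + y0*y2 + y0*y3 + y1*y2 + y1*y3 + y2*y3) - (1/2)*(y1 + 2*y2 + 3*y3)

lemma cert (x0 x1 x2 x3 t0 t1 t2 t3 : ℝ) (hx : x0+x1+x2+x3 = 1) (ht : t0+t1+t2+t3 = 1) :
    x0*t1 + x0*t2 + x0*t3 + x1*t2 + x1*t3 + x2*t3
      + (t0*t1 + t0*t2 + t0*t3 + t1*t2 + t1*t3 + t2*t3)
    ≤ 3/4 + Vq x0 x1 x2 x3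
      - Vq ((x0+t0)/2) ((x1+t1)/2) ((x2+t2)/2) ((x3+t3)/2) := by
  have hx3 : x3 = 1 - x0 - x1 - x2 := by linarith
  have ht3 : t3 = 1 - t0 - t1 - t2 := by linarith
  subst hx3 ht3
  simp only [Vq]
  nlinarith [sq_nonneg ((x0 - 1/4) + (x1 - 1/4)/2 + (x2 - 1/4)/2 + (t0 - 1/4)/9 - (t1 - 1/4)/6 - (t2 - 1/4)/6),
    sq_nonneg ((x1 - 1/4) + (x2 - 1/4)/3 + 8*(t0 - 1/4)/27 + 7*(t1 - 1/4)/27 - (t2 - 1/4)/9),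
    sq_nonneg ((x2 - 1/4) + 2*(t0 - 1/4)/9 + 4*(t1 - 1/4)/9 + (t2 - 1/4)/3),
    sq_nonneg ((t0 - 1/4) + 7*(t1 - 1/4)/18 + 11*(t2 - 1/4)/18),
    sq_nonneg ((t1 - 1/4) + 7*(t2 - 1/4)/29),
    sq_nonneg (t2 - 1/4)]

lemma Vq_nonpos (y0 y1 y2 y3 : ℝ) (h0 : 0 ≤ y0) (h1 : 0 ≤ y1) (h2 : 0 ≤ y2) (h3 : 0 ≤ y3) :
    Vq y0 y1 y2 y3 ≤ 0 := by
  simp only [Vq]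
  nlinarith [mul_nonneg h0 h1, mul_nonneg h0 h2, mul_nonneg h0 h3, mul_nonneg h1 h2,
    mul_nonneg h1 h3, mul_nonneg h2 h3]

lemma Vq_lower (y0 y1 y2 y3 : ℝ) (h0 : 0 ≤ y0) (h1 : 0 ≤ y1) (h2 : 0 ≤ y2) (h3 : 0 ≤ y3)
    (hs : y0 + y1 + y2 + y3 = 1) : -(9/4) ≤ Vq y0 y1 y2 y3 := by
  simp only [Vq]
  nlinarith [sq_nonneg y0, sq_nonneg y1, sq_nonneg y2, sq_nonneg y3]

noncomputable def xr (G : SimpleGraph ℕ) (i n : ℕ) : ℝ := (cnt G i n : ℝ) / n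
noncomputable def Vt (G : SimpleGraph ℕ) (n : ℕ) : ℝ :=
  Vq (xr G 0 n) (xr G 1 n) (xr G 2 n) (xr G 3 n)

lemma xr_nonneg (G : SimpleGraph ℕ) (i n : ℕ) : 0 ≤ xr G i n :=
  div_nonneg (Nat.cast_nonneg _) (Nat.cast_nonneg _)

lemma xr_sum (G : SimpleGraph ℕ) (n : ℕ) (hn : 1 ≤ n) :
    xr G 0 n + xr G 1 n + xr G 2 n + xr G 3 n = 1 := by
  have h : (cnt G 0 n : ℝ) + cnt G 1 n + cnt G 2 n + cnt G 3 n = (n : ℝ) := by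
    exact_mod_cast congrArg (Nat.cast : ℕ → ℝ) (cnt_sum G n)
  have hn0 : (n : ℝ) ≠ 0 := by positivity
  unfold xr
  field_simp
  linarith

lemma Vt_nonpos (G : SimpleGraph ℕ) (n : ℕ) : Vt G n ≤ 0 :=
  Vq_nonpos _ _ _ _ (xr_nonneg G 0 n) (xr_nonneg G 1 n) (xr_nonneg G 2 n) (xr_nonneg G 3 n)

lemma Vt_lower (G : SimpleGraph ℕ) (n : ℕ) (hn : 1 ≤ n) : -(9/4) ≤ Vt G n :=
  Vq_lower _ _ _ _ (xr_nonneg G 0 n) (xr_nonneg G 1 n) (xr_nonneg G 2 n) (xr_nonneg G 3 n)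
    (xr_sum G n hn)

lemma step (G : SimpleGraph ℕ) (t : ℕ) (ht : 1 ≤ t) :
    (incP G (2*t) : ℝ) ≤ (incP G t : ℝ) + (t:ℝ)^2 * (3/4 + Vt G t - Vt G (2*t)) := by
  have htr : (0:ℝ) < (t : ℝ) := by exact_mod_cast ht
  set x0 := xr G 0 t; set x1 := xr G 1 t; set x2 := xr G 2 t; set x3 := xr G 3 t
  set θ0 := (bw G 0 t : ℝ)/(t:ℝ); set θ1 := (bw G 1 t : ℝ)/(t:ℝ)
  set θ2 := (bw G 2 t : ℝ)/(t:ℝ); set θ3 := (bw G 3 t : ℝ)/(t:ℝ)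
  have hx : x0 + x1 + x2 + x3 = 1 := xr_sum G t ht
  have hθ : θ0 + θ1 + θ2 + θ3 = 1 := by
    have h : (bw G 0 t : ℝ) + bw G 1 t + bw G 2 t + bw G 3 t = (t : ℝ) := by
      exact_mod_cast congrArg (Nat.cast : ℕ → ℝ) (bw_sum G t)
    show (bw G 0 t : ℝ)/t + (bw G 1 t : ℝ)/t + (bw G 2 t : ℝ)/t + (bw G 3 t : ℝ)/t = 1
    rw [← add_div, ← add_div, ← add_div, h, div_self htr.ne']
  have hXp : ∀ i, xr G i (2*t) = (xr G i t + (bw G i t : ℝ)/(t:ℝ))/2 := by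
    intro i
    unfold xr
    rw [cnt_double G i t ht]
    push_cast
    rw [← add_div, div_div]
    ring
  have hVt2 : Vt G (2*t) = Vq ((x0+θ0)/2) ((x1+θ1)/2) ((x2+θ2)/2) ((x3+θ3)/2) := by
    unfold Vt
    rw [hXp 0, hXp 1, hXp 2, hXp 3]
  have hcert := cert x0 x1 x2 x3 θ0 θ1 θ2 θ3 hx hθ
  rw [← hVt2] at hcert
  have hmul := mul_le_mul_of_nonneg_left hcert (le_of_lt (by positivity : (0:ℝ) < (t:ℝ)^2))
  have hid : (t:ℝ)^2 * (x0*θ1 + x0*θ2 + x0*θ3 + x1*θ2 + x1*θ3 + x2*θ3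
      + (θ0*θ1 + θ0*θ2 + θ0*θ3 + θ1*θ2 + θ1*θ3 + θ2*θ3))
      = ((cnt G 0 t * bw G 1 t + (cnt G 0 t + cnt G 1 t) * bw G 2 t
         + (cnt G 0 t + cnt G 1 t + cnt G 2 t) * bw G 3 t : ℕ) : ℝ)
      + ((bw G 0 t * bw G 1 t + bw G 0 t * bw G 2 t + bw G 0 t * bw G 3 t
         + bw G 1 t * bw G 2 t + bw G 1 t * bw G 3 t + bw G 2 t * bw G 3 t : ℕ) : ℝ) := by
    simp only [x0, x1, x2, x3, θ0, θ1, θ2, θ3, xr]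
    push_cast
    field_simp
    ring
  have hwin : (incP G (2*t) : ℝ) ≤ (incP G t : ℝ)
      + ((cnt G 0 t * bw G 1 t + (cnt G 0 t + cnt G 1 t) * bw G 2 t
         + (cnt G 0 t + cnt G 1 t + cnt G 2 t) * bw G 3 t : ℕ) : ℝ)
      + ((bw G 0 t * bw G 1 t + bw G 0 t * bw G 2 t + bw G 0 t * bw G 3 t
         + bw G 1 t * bw G 2 t + bw G 1 t * bw G 3 t + bw G 2 t * bw G 3 t : ℕ) : ℝ) := by
    exact_mod_cast window G t ht
  calc (incP G (2*t) : ℝ) ≤ _ := hwin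
    _ = (incP G t : ℝ) + (t:ℝ)^2 * (x0*θ1 + x0*θ2 + x0*θ3 + x1*θ2 + x1*θ3 + x2*θ3
      + (θ0*θ1 + θ0*θ2 + θ0*θ3 + θ1*θ2 + θ1*θ3 + θ2*θ3)) := by rw [hid]; ring
    _ ≤ (incP G t : ℝ) + (t:ℝ)^2 * (3/4 + Vt G t - Vt G (2*t)) := by
        have : Vt G t = Vq x0 x1 x2 x3 := rfl
        rw [this]
        linarith [hmul]

lemma coloring_contra (G : SimpleGraph ℕ) (ε : ℝ) (hε : 0 < ε) (N : ℕ) (hN : 1 ≤ N)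
    (h : ∀ k : ℕ, 1/4 + ε ≤ (incP G (N * 2^k) : ℝ) / ((N * 2^k : ℕ) : ℝ)^2) : False := by
  set t : ℕ → ℕ := fun k => N * 2^k with htdef
  have ht1 : ∀ k, 1 ≤ t k := by
    intro k
    have : 0 < 2^k := pow_pos (by norm_num) k
    simp only [htdef]
    exact Nat.one_le_iff_ne_zero.mpr (by positivity)
  have htsucc : ∀ k, t (k+1) = 2 * t k := by
    intro k; simp only [htdef]; ring
  set p : ℕ → ℝ := fun k => (incP G (t k) : ℝ) / ((t k : ℕ) : ℝ)^2 with hpdef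
  set v : ℕ → ℝ := fun k => Vt G (t k) with hvdef
  set φ : ℕ → ℝ := fun k => v k + 4*(p k - 1/4) with hφdef
  have htr : ∀ k, (0:ℝ) < ((t k : ℕ) : ℝ) := by
    intro k; exact_mod_cast ht1 k
  have hstep : ∀ k, φ (k+1) ≤ φ k - 3*ε := by
    intro k
    have hs := step G (t k) (ht1 k)
    rw [← htsucc k] at hs
    have ht2 : ((t (k+1) : ℕ) : ℝ) = 2 * ((t k : ℕ) : ℝ) := by
      rw [htsucc]; push_cast; ring
    have hs' : (incP G (t (k+1)) : ℝ) ≤ (incP G (t k) : ℝ)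
        + ((t k : ℕ) : ℝ)^2 * (3/4 + v k - v (k+1)) := hs
    have hp1 : p (k+1) ≤ (p k + 3/4 + v k - v (k+1))/4 := by
      rw [hpdef]
      simp only
      rw [ht2]
      rw [div_le_div_iff₀ (by positivity) (by norm_num : (0:ℝ) < 4)]
      have hpk : (incP G (t k) : ℝ) = p k * ((t k : ℕ) : ℝ)^2 := by
        rw [hpdef]; simp only; rw [div_mul_cancel₀ _ (pow_pos (htr k) 2).ne']
      nlinarith [hs', sq_nonneg ((t k : ℕ) : ℝ), htr k]
    have hpk := h k
    have hpkk : 1/4 + ε ≤ p k := hpk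
    simp only [hφdef]
    nlinarith [hp1, hpkk]
  have hind : ∀ K : ℕ, φ K ≤ φ 0 - 3*ε*K := by
    intro K
    induction K with
    | zero => simp
    | succ n ih =>
      have := hstep n
      push_cast
      push_cast at ih
      linarith
  have hφ0 : φ 0 ≤ 3 := by
    have hv0 : v 0 ≤ 0 := Vt_nonpos G (t 0)
    have hp0 : p 0 ≤ 1 := by
      rw [hpdef]
      simp only
      rw [div_le_one (by positivity)]
      have := incP_le G (t 0)
      have : (incP G (t 0) : ℝ) ≤ ((t 0 : ℕ) : ℝ) * ((t 0 : ℕ) : ℝ) := by exact_mod_cast this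
      nlinarith
    simp only [hφdef]
    linarith
  have hlowAll : ∀ K : ℕ, -(9/4) ≤ φ K := by
    intro K
    have hvK : -(9/4) ≤ v K := Vt_lower G (t K) (ht1 K)
    have hpK : 1/4 + ε ≤ p K := h K
    simp only [hφdef]
    nlinarith
  clear_value φ v p
  obtain ⟨K, hK⟩ := exists_nat_gt ((φ 0 + 9/4) / (3*ε))
  have hlow := hlowAll K
  have hup := hind K
  have hgt : φ 0 + 9/4 < 3*ε*(K:ℝ) := by
    rw [div_lt_iff₀ (by positivity : (0:ℝ) < 3*ε)] at hK
    linarith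
  linarith

lemma edgeCount_le_incP (G : SimpleGraph ℕ) (hG : ¬ HasIncPath G 4) (n : ℕ) :
    edgeCount G n ≤ incP G n := by
  classical
  have hset : {p : ℕ × ℕ | 1 ≤ p.1 ∧ p.1 < p.2 ∧ p.2 ≤ n ∧ G.Adj p.1 p.2}
      = ↑(((Finset.Icc 1 n) ×ˢ (Finset.Icc 1 n)).filter
          (fun p => p.1 < p.2 ∧ G.Adj p.1 p.2)) := by
    ext ⟨u, v⟩
    simp only [Set.mem_setOf_eq, Finset.coe_filter, Finset.mem_product, Finset.mem_Icc,
      Set.mem_setOf_eq]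
    constructor
    · rintro ⟨h1, h2, h3, h4⟩
      exact ⟨⟨⟨h1, by omega⟩, by omega, h3⟩, h2, h4⟩
    · rintro ⟨⟨⟨h1, h2⟩, h3, h4⟩, h5, h6⟩
      exact ⟨h1, h5, h4, h6⟩
  rw [edgeCount, hset, Set.ncard_coe_finset]
  apply Finset.card_le_card
  intro p hp
  simp only [Finset.mem_filter, Finset.mem_product, Finset.mem_Icc] at hp
  obtain ⟨⟨⟨h1, h2⟩, h3, h4⟩, h5, h6⟩ := hp
  simp only [incP, pairF, Finset.mem_filter, Finset.mem_product, Finset.mem_Icc]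
  exact ⟨⟨⟨h1, h2⟩, h3, h4⟩, h5, aCol_lt_of_adj G hG h1 h5 h6⟩

theorem liminf_le_of_I4_free (G : SimpleGraph ℕ) (hG : ¬ HasIncPath G 4) :
    liminf (fun n : ℕ => (edgeCount G n : ℝ) / n ^ 2) atTop ≤ 1 / 4 := by
  by_contra hlt
  push_neg at hlt
  set f : ℕ → ℝ := fun n : ℕ => (edgeCount G n : ℝ) / n ^ 2 with hfdef
  set L := liminf f atTop with hLdef
  have hbdd : IsBoundedUnder (· ≥ ·) atTop f := by
    refine ⟨0, ?_⟩
    simp only [eventually_map]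
    exact Filter.Eventually.of_forall (fun n => by positivity)
  have hev : ∀ᶠ n in atTop, 1/4 + (L - 1/4)/2 < f n := by
    apply Filter.eventually_lt_of_lt_liminf _ hbdd
    rw [← hLdef]
    linarith
  obtain ⟨N₁, hN₁⟩ := (Filter.eventually_atTop).mp hev
  apply coloring_contra G ((L - 1/4)/2) (by linarith) (max N₁ 1) (le_max_right _ _)
  intro k
  set n := max N₁ 1 * 2^k with hndef
  have h2k : 1 ≤ 2^k := Nat.one_le_two_pow
  have hn1 : N₁ ≤ n := by
    calc N₁ ≤ max N₁ 1 := le_max_left _ _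
      _ = max N₁ 1 * 1 := (mul_one _).symm
      _ ≤ n := Nat.mul_le_mul_left _ h2k
  have hnpos : 1 ≤ n := by
    calc 1 ≤ max N₁ 1 := le_max_right _ _
      _ = max N₁ 1 * 1 := (mul_one _).symm
      _ ≤ n := Nat.mul_le_mul_left _ h2k
  have hedge := hN₁ n hn1
  have hle : (edgeCount G n : ℝ) ≤ (incP G n : ℝ) := by
    exact_mod_cast edgeCount_le_incP G hG n
  have hn0 : (0:ℝ) < ((n:ℕ):ℝ)^2 := by
    have : (0:ℝ) < ((n:ℕ):ℝ) := by exact_mod_cast hnpos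
    positivity
  calc 1/4 + (L - 1/4)/2 ≤ f n := le_of_lt hedge
    _ = (edgeCount G n : ℝ) / ((n:ℕ):ℝ)^2 := rfl
    _ ≤ (incP G n : ℝ) / ((n:ℕ):ℝ)^2 := by gcongr
end

section
/- There exists a simple graph G on the positive integers that is I_4-free and satisfies liminf_{n→∞} e(G_n)/n² ≥ 109513/584064, i.e., ≥ (1/4)(1 − 1/4) + 1/584064. -/
open Filter

namespace I4C
set_option maxRecDepth 40000

def TBL : List ℕ := [0, 1, 1, 2, 1, 2, 1, 2, 2, 2, 0, 2, 2, 2, 0, 2, 2, 2, 0, 2, 2, 2, 0, 2, 2, 2, 0, 2, 2, 2, 0, 2, 2, 2, 2, 0, 2, 2, 2, 0, 2, 2, 3, 0, 3, 0, 2, 0, 2, 3, 0, 2, 3, 0, 3, 0, 2, 0, 3, 0, 3, 0, 3, 0, 3, 0, 3, 0, 3, 0, 3, 0, 3, 0, 3, 0, 3, 0, 3, 0, 3, 0, 3, 0, 3, 0, 3, 0, 3, 0, 3, 0, 3, 0, 3, 0, 3, 0, 3, 0, 3, 0, 3, 0, 3, 0, 3, 0, 3, 0, 3, 0, 3, 0,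 3, 1, 1, 1, 3, 0, 3, 0, 3, 0, 3, 1, 1, 3, 0, 1, 3, 0, 3, 1, 1, 3, 0, 1, 3, 0, 3, 3, 0, 1, 1, 1, 2, 1, 3, 1, 1, 1, 1, 3, 1, 1, 1, 3, 1, 1, 1, 3, 0, 3, 1, 1, 1, 3, 1, 1, 1, 2, 1, 3, 0, 3, 1, 1, 1, 3, 0, 3, 1, 1, 1, 2, 3, 0, 3, 0, 1, 2, 1, 3, 1, 1, 1, 2, 1, 2, 1, 2, 1, 2, 1, 2, 1, 2, 1, 2, 1, 2, 1, 1, 2, 1, 2, 1, 2, 1, 3, 1, 1, 3, 1, 1, 1, 2, 1, 2, 1, 2, 1, 2, 1, 2, 1, 2, 1, 2, 1, 2, 3, 0, 2, 2, 0, 2, 3, 0, 1, 2, 2, 3, 3, 3]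

def LH0 : List ℕ := [0, 0, 0, 0, 0, 0, 0, 0, 0, 0, 0, 0, 0, 0, 0, 0, 0, 0, 0, 0, 0, 0, 0, 0, 0, 0, 0, 0, 0, 0, 0, 0, 0, 0, 0, 0, 0, 0, 0, 0, 0, 0, 0, 0, 0, 0, 0, 0, 0, 0, 0, 0, 0, 0, 0, 0, 0, 0, 0, 0, 0, 0, 0, 0, 0, 0, 0, 0, 0, 0, 0, 0, 0, 0, 0, 0, 0, 0, 0, 0, 0, 0, 0, 0, 0, 0, 0, 0, 0, 0, 0, 0, 0, 0, 0, 0, 0, 0, 0, 0, 0, 0, 0, 0, 0, 0, 0, 0, 0, 0, 0, 0, 0, 0, 0, 0, 0, 0, 0, 0, 0, 0, 0, 0, 0, 0, 0, 0, 0, 0, 0, 0, 0, 0, 0, 0, 0, 0, 0, 0, 0, 0, 0, 0, 0, 0, 0, 0, 0, 0, 0, 0, 0, 0, 0, 0, 0, 0, 0, 0, 0, 0, 0, 0, 0, 0, 0, 0, 0, 0, 0, 0, 0, 0, 0, 0, 0, 0, 0, 0, 0, 0, 0, 0, 0, 0, 0, 0, 0, 0, 0, 0, 0, 0, 0, 0,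 0, 0, 0, 0, 0, 0, 0, 0, 0, 0, 0, 0, 0, 0, 0, 0, 0, 0, 0, 0, 0, 0, 0, 0, 0, 0, 0, 0, 0, 0, 0, 0, 0, 0, 0, 0, 0, 0, 0, 0, 0, 0, 0, 0, 0, 0, 0, 0, 0, 0, 0, 0, 0, 0, 0, 0, 0, 0, 0, 0, 0]

def LH1 : List ℕ := [0, 1, 1, 1, 1, 1, 1, 1, 1, 1, 1, 2, 2, 2, 2, 3, 3, 3, 3, 4, 4, 4, 4, 5, 5, 5, 5, 6, 6, 6, 6, 7, 7, 7, 7, 7, 8, 8, 8, 8, 9, 9, 9, 9, 10, 10, 11, 11, 12, 12, 12, 13, 13, 13, 14, 14, 15, 15, 16, 16, 17, 17, 18, 18, 19, 19, 20, 20, 21, 21, 22, 22, 23, 23, 24, 24, 25, 25, 26, 26, 27, 27, 28, 28, 29, 29, 30, 30, 31, 31, 32, 32, 33, 33, 34, 34, 35, 35, 36, 36, 37, 37, 38, 38, 39, 39, 40, 40, 41, 41, 42, 42, 43, 43, 44, 44, 44, 44, 44, 44, 45, 45, 46, 46, 47, 47, 47, 47, 47, 48, 48, 48, 49, 49, 49,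 49, 49, 50, 50, 50, 51, 51, 51, 52, 52, 52, 52, 52, 52, 52, 52, 52, 52, 52, 52, 52, 52, 52, 52, 52, 52, 52, 52, 53, 53, 53, 53, 53, 53, 53, 53, 53, 53, 53, 53, 54, 54, 54, 54, 54, 54, 55, 55, 55, 55, 55, 55, 55, 56, 56, 57, 57, 57, 57, 57, 57, 57, 57, 57, 57, 57, 57, 57, 57, 57, 57, 57, 57, 57, 57, 57, 57, 57, 57, 57, 57, 57, 57, 57, 57, 57, 57, 57, 57, 57, 57, 57, 57, 57, 57, 57, 57, 57, 57, 57, 57, 57, 57, 57, 57, 57, 57, 57, 57, 58, 58, 58, 59, 59, 59, 60, 60, 60, 60, 60, 60, 60]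

def LH2 : List ℕ := [0, 1, 2, 3, 3, 4, 4, 5, 5, 5, 5, 6, 6, 6, 6, 7, 7, 7, 7, 8, 8, 8, 8, 9, 9, 9, 9, 10, 10, 10, 10, 11, 11, 11, 11, 11, 12, 12, 12, 12, 13, 13, 13, 13, 14, 14, 15, 15, 16, 16, 16, 17, 17, 17, 18, 18, 19, 19, 20, 20, 21, 21, 22, 22, 23, 23, 24, 24, 25, 25, 26, 26, 27, 27, 28, 28, 29, 29, 30, 30, 31, 31, 32, 32, 33, 33, 34, 34, 35, 35, 36, 36, 37, 37, 38, 38, 39, 39, 40, 40, 41, 41, 42, 42, 43, 43, 44, 44, 45, 45, 46, 46, 47, 47, 48, 48, 49, 50, 51, 51, 52, 52, 53, 53, 54, 54, 55, 56, 56, 57, 58, 58, 59, 59, 60, 61, 61, 62, 63, 63, 64, 64, 64, 65, 66, 67, 68, 68, 69, 69, 70, 71, 72, 73, 73, 74, 75, 76, 76, 77, 78, 79, 79, 80, 80, 81, 82, 83, 83, 84, 85, 86, 86, 87, 87, 88, 88, 89, 90, 91, 91, 92, 92, 93, 94, 95, 95, 95, 96, 96, 97, 98, 98, 99, 99, 100,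 101, 102, 102, 103, 103, 104, 104, 105, 105, 106, 106, 107, 107, 108, 108, 109, 109, 110, 111, 111, 112, 112, 113, 113, 114, 114, 115, 116, 116, 117, 118, 119, 119, 120, 120, 121, 121, 122, 122, 123, 123, 124, 124, 125, 125, 126, 126, 126, 127, 127, 127, 128, 128, 128, 129, 130, 130, 130, 130, 130, 130]

def LH3 : List ℕ := [0, 1, 2, 3, 4, 5, 6, 7, 8, 9, 10, 11, 12, 13, 14, 15, 16, 17, 18, 19, 20, 21, 22, 23, 24, 25, 26, 27, 28, 29, 30, 31, 32, 33, 34, 35, 36, 37, 38, 39, 40, 41, 42, 42, 43, 43, 44, 45, 46, 47, 47, 48, 49, 49, 50, 50, 51, 52, 53, 53, 54, 54, 55, 55, 56, 56, 57, 57, 58, 58, 59, 59, 60, 60, 61, 61, 62, 62, 63, 63, 64, 64, 65, 65, 66, 66, 67, 67, 68, 68, 69, 69, 70, 70, 71, 71, 72, 72, 73, 73, 74, 74, 75, 75, 76, 76, 77, 77, 78, 78, 79, 79, 80, 80, 81, 81, 82, 83, 84, 84, 85, 85, 86, 86, 87, 87, 88, 89, 89, 90, 91, 91, 92, 92, 93,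 94, 94, 95, 96, 96, 97, 97, 97, 98, 99, 100, 101, 102, 103, 103, 104, 105, 106, 107, 107, 108, 109, 110, 110, 111, 112, 113, 113, 114, 114, 115, 116, 117, 117, 118, 119, 120, 121, 122, 122, 123, 123, 124, 125, 126, 126, 127, 127, 128, 129, 130, 131, 131, 132, 132, 133, 134, 135, 136, 136, 137, 138, 139, 140, 141, 142, 143, 144, 145, 146, 147, 148, 149, 150, 151, 152, 153, 154, 155, 156, 157, 158, 159, 160, 161, 162, 162, 163, 164, 164, 165, 166, 167, 168, 169, 170, 171, 172, 173, 174, 175, 176, 177, 178, 179, 180, 181, 182, 182, 183, 184, 185, 186, 187, 187, 188, 189, 190, 191, 191, 191, 191]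

def LZt : List ℕ := [0, 0, 1, 2, 3, 4, 5, 6, 7, 8, 9, 9, 10, 11, 12, 12, 13, 14, 15, 15, 16, 17, 18, 18, 19, 20, 21, 21, 22, 23, 24, 24, 25, 26, 27, 28, 28, 29, 30, 31, 31, 32, 33, 34, 34, 35, 35, 36, 36, 37, 38, 38, 39, 40, 40, 41, 41, 42, 42, 43, 43, 44, 44, 45, 45, 46, 46, 47, 47, 48, 48, 49, 49, 50, 50, 51, 51, 52, 52, 53, 53, 54, 54, 55, 55, 56, 56, 57, 57, 58, 58, 59, 59, 60, 60, 61, 61, 62, 62, 63, 63, 64, 64, 65, 65, 66, 66, 67, 67, 68, 68, 69, 69, 70, 70, 71, 72, 73, 74, 75, 75, 76, 76, 77, 77, 78, 79, 80, 81, 81, 82, 83, 83, 84, 85, 86, 87, 87, 88, 89, 89, 90, 91, 91, 92, 93, 94, 95, 96, 97, 98, 99, 100, 101, 102, 103, 104, 105, 106, 107, 108, 109, 110, 110, 111, 112, 113, 114, 115, 116, 117, 118, 119, 120, 121, 121, 122, 123, 124, 125, 126, 126, 127, 128, 129, 130, 131, 132, 132, 133, 133, 134, 135, 136, 137, 138,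 139, 140, 141, 142, 143, 144, 145, 146, 147, 148, 149, 150, 151, 152, 153, 154, 155, 156, 157, 158, 159, 160, 161, 162, 163, 164, 165, 166, 167, 168, 169, 170, 171, 172, 173, 174, 175, 176, 177, 178, 179, 180, 181, 182, 183, 184, 185, 186, 186, 187, 188, 188, 189, 190, 190, 191, 192, 193, 194, 195, 196]

def LVt : List ℕ := [0, 0, 60, 120, 250, 310, 440, 500, 630, 760, 890, 890, 1020, 1150, 1280, 1280, 1410, 1540, 1670, 1670, 1800, 1930, 2060, 2060, 2190, 2320, 2450, 2450, 2580, 2710, 2840, 2840, 2970, 3100, 3230, 3360, 3360, 3490, 3620, 3750, 3750, 3880, 4010, 4201, 4201, 4392, 4392, 4522, 4522, 4652, 4843, 4843, 4973, 5164, 5164, 5355, 5355, 5485, 5485, 5676, 5676, 5867, 5867, 6058, 6058, 6249, 6249, 6440, 6440, 6631, 6631, 6822, 6822, 7013, 7013, 7204, 7204, 7395, 7395, 7586, 7586, 7777, 7777, 7968, 7968, 8159, 8159, 8350, 8350, 8541, 8541, 8732, 8732, 8923, 8923, 9114, 9114, 9305, 9305, 9496, 9496, 9687, 9687, 9878, 9878,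 10069, 10069, 10260, 10260, 10451, 10451, 10642, 10642, 10833, 10833, 11024, 11084, 11144, 11204, 11395, 11395, 11586, 11586, 11777, 11777, 11968, 12028, 12088, 12279, 12279, 12339, 12530, 12530, 12721, 12781, 12841, 13032, 13032, 13092, 13283, 13283, 13474, 13665, 13665, 13725, 13785, 13845, 13975, 14035, 14226, 14286, 14346, 14406, 14466, 14657, 14717, 14777, 14837, 15028, 15088, 15148, 15208, 15399, 15399, 15590, 15650, 15710, 15770, 15961, 16021, 16081, 16141, 16271, 16331, 16522, 16522, 16713, 16773, 16833, 16893, 17084, 17084, 17275, 17335, 17395, 17455, 17585, 17776, 17776, 17967, 17967, 18027, 18157, 18217, 18408, 18468, 18528, 18588, 18718, 18778, 18908, 18968, 19098, 19158, 19288, 19348, 19478, 19538, 19668, 19728, 19858, 19918, 20048, 20108, 20168, 20298, 20358, 20488, 20548, 20678, 20738, 20929, 20989, 21049, 21240, 21300, 21360, 21420, 21550, 21610, 21740, 21800, 21930, 21990, 22120, 22180, 22310, 22370, 22500, 22560, 22690, 22750, 22880, 23071, 23071, 23201, 23331, 23331, 23461, 23652, 23652, 23712, 23842, 23972, 24163,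 24354, 24545]

def LWt : List ℕ := [0, 0, 1, 2, 5, 6, 10, 11, 16, 21, 26, 26, 32, 38, 44, 44, 51, 58, 65, 65, 73, 81, 89, 89, 98, 107, 116, 116, 126, 136, 146, 146, 157, 168, 179, 190, 190, 202, 214, 226, 226, 239, 252, 294, 294, 337, 337, 352, 352, 368, 415, 415, 432, 481, 481, 531, 531, 550, 550, 603, 603, 657, 657, 712, 712, 768, 768, 825, 825, 883, 883, 942, 942, 1002, 1002, 1063, 1063, 1125, 1125, 1188, 1188, 1252, 1252, 1317, 1317, 1383, 1383, 1450, 1450, 1518, 1518, 1587, 1587, 1657, 1657, 1728, 1728, 1800, 1800, 1873, 1873, 1947, 1947, 2022, 2022, 2098, 2098, 2175, 2175, 2253, 2253, 2332, 2332, 2412, 2412, 2493, 2537, 2581, 2625, 2709, 2709, 2794, 2794, 2880, 2880, 2967, 3014, 3061, 3150, 3150, 3198, 3289, 3289, 3381, 3430, 3479, 3573, 3573, 3623, 3719, 3719, 3816, 3913, 3913, 3965, 4017, 4069, 4137, 4189, 4292, 4344, 4396, 4448, 4500, 4607, 4659, 4711, 4763, 4873, 4925, 4977, 5029, 5142, 5142,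 5256, 5309, 5362, 5415, 5532, 5585, 5638, 5691, 5777, 5830, 5952, 5952, 6075, 6129, 6183, 6237, 6363, 6363, 6490, 6545, 6600, 6655, 6750, 6881, 6881, 7013, 7013, 7070, 7168, 7225, 7361, 7418, 7475, 7532, 7634, 7691, 7794, 7851, 7955, 8012, 8117, 8174, 8280, 8337, 8444, 8501, 8609, 8666, 8775, 8832, 8889, 9000, 9057, 9169, 9226, 9339, 9396, 9558, 9615, 9672, 9836, 9893, 9950, 10007, 10126, 10183, 10303, 10360, 10481, 10538, 10660, 10717, 10840, 10897, 11021, 11078, 11203, 11260, 11386, 11568, 11568, 11695, 11822, 11822, 11950, 12137, 12137, 12197, 12327, 12457, 12648, 12839, 13030]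


def pat (k : ℕ) : ℕ := TBL.getD k 0

def phi : ℕ → ℕ
  | u =>
    if h : u < 512 then (if 256 ≤ u then pat (u - 256) else 0)
    else phi (u / 2)
  decreasing_by exact Nat.div_lt_self (by omega) one_lt_two

lemma phi_low {u : ℕ} (h : u < 256) : phi u = 0 := by
  rw [phi]; simp [show u < 512 by omega, show ¬ 256 ≤ u by omega]

lemma phi_mid {u : ℕ} (h1 : 256 ≤ u) (h2 : u < 512) : phi u = pat (u - 256) := by
  rw [phi]; simp [h1, h2]

lemma phi_rec {u : ℕ} (h : 512 ≤ u) : phi u = phi (u / 2) := by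
  rw [phi]; simp [show ¬ u < 512 by omega]

lemma pat_lt4 (k : ℕ) : pat k < 4 := by
  rcases lt_or_ge k 256 with h | h
  · revert k h
    decide
  · rw [pat, List.getD_eq_default]
    · norm_num
    · rw [show TBL.length = 256 from by decide]; omega

lemma phi_lt4 (u : ℕ) : phi u < 4 := by
  induction u using Nat.strong_induction_on with
  | _ u ih =>
    rcases lt_or_ge u 256 with h | h
    · rw [phi_low h]; norm_num
    rcases lt_or_ge u 512 with h2 | h2
    · rw [phi_mid h h2]; exact pat_lt4 _
    · rw [phi_rec h2]; exact ih _ (Nat.div_lt_self (by omega) one_lt_two)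

def G : SimpleGraph ℕ where
  Adj u v := (u < v ∧ phi u < phi v) ∨ (v < u ∧ phi v < phi u)
  symm := ⟨by intro u v h; tauto⟩
  loopless := ⟨by intro u h; rcases h with ⟨h, _⟩ | ⟨h, _⟩ <;> omega⟩

lemma adj_lt {u v : ℕ} (h : G.Adj u v) (huv : u < v) : phi u < phi v := by
  rcases h with ⟨_, h⟩ | ⟨h, _⟩
  · exact h
  · omega

theorem noPath : ¬ HasIncPath G 4 := by
  rintro ⟨f, -, hmono, hadj⟩
  have h0 := adj_lt (hadj 0) (hmono (by decide : (Fin.castSucc (0:Fin 4)) < Fin.succ 0))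
  have h1 := adj_lt (hadj 1) (hmono (by decide : (Fin.castSucc (1:Fin 4)) < Fin.succ 1))
  have h2 := adj_lt (hadj 2) (hmono (by decide : (Fin.castSucc (2:Fin 4)) < Fin.succ 2))
  have h3 := adj_lt (hadj 3) (hmono (by decide : (Fin.castSucc (3:Fin 4)) < Fin.succ 3))
  have e1 : Fin.succ (0:Fin 4) = Fin.castSucc 1 := by decide
  have e2 : Fin.succ (1:Fin 4) = Fin.castSucc 2 := by decide
  have e3 : Fin.succ (2:Fin 4) = Fin.castSucc 3 := by decide
  rw [e1] at h0
  rw [e2] at h1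
  rw [e3] at h2
  have h4 := phi_lt4 (f (Fin.succ (3:Fin 4)))
  omega

open Finset in
def Nlt (l n : ℕ) : ℕ := ((Finset.Ico 1 n).filter fun u => phi u < l).card

open Finset in
def Ec (n : ℕ) : ℕ := ∑ v ∈ Finset.Ico 1 n, Nlt (phi v) v

open Finset in
lemma Nlt_succ (l : ℕ) {n : ℕ} (h : 1 ≤ n) :
    Nlt l (n + 1) = Nlt l n + if phi n < l then 1 else 0 := by
  rw [Nlt, Nat.Ico_succ_right_eq_insert_Ico h, filter_insert]
  split
  · rw [card_insert_of_notMem (by simp [mem_filter])]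
    rfl
  · rw [Nlt, add_zero]

open Finset in
lemma Ec_succ {n : ℕ} (h : 1 ≤ n) : Ec (n + 1) = Ec n + Nlt (phi n) n :=
  Finset.sum_Ico_succ_top h _

open Finset in
lemma Nlt_le (l n : ℕ) : Nlt l n ≤ n := le_trans (card_filter_le _ _) (by simp)

open Finset in
lemma edgeCount_eq (n : ℕ) : edgeCount G n = Ec (n + 1) := by
  classical
  have hset : {p : ℕ × ℕ | 1 ≤ p.1 ∧ p.1 < p.2 ∧ p.2 ≤ n ∧ G.Adj p.1 p.2} =
      ↑(((Finset.Ico 1 (n+1)) ×ˢ (Finset.Ico 1 (n+1))).filter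
        fun p => p.1 < p.2 ∧ phi p.1 < phi p.2) := by
    ext ⟨u, v⟩
    simp only [Set.mem_setOf_eq, coe_filter, mem_product, mem_Ico, Set.mem_setOf_eq]
    constructor
    · rintro ⟨h1, h2, h3, h4⟩
      exact ⟨⟨⟨h1, by omega⟩, ⟨by omega, by omega⟩⟩, h2, adj_lt h4 h2⟩
    · rintro ⟨⟨⟨h1, h2⟩, h3, h4⟩, h5, h6⟩
      exact ⟨h1, h5, by omega, Or.inl ⟨h5, h6⟩⟩
  rw [edgeCount, hset, Set.ncard_coe_finset]
  rw [Finset.card_eq_sum_card_fiberwise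
    (f := Prod.snd) (t := Finset.Ico 1 (n+1))
    (fun p hp => by simp only [mem_coe, mem_filter, mem_product] at hp; exact hp.1.2)]
  rw [Ec]
  apply Finset.sum_congr rfl
  intro v hv
  rw [Nlt]
  apply Finset.card_bij (fun p _ => p.1)
  · rintro ⟨u, w⟩ hp
    simp only [mem_filter, mem_product, mem_Ico] at hp ⊢
    obtain ⟨⟨⟨⟨hu1, hu2⟩, _⟩, hlt, hphi⟩, hw⟩ := hp
    subst hw
    exact ⟨⟨hu1, hlt⟩, hphi⟩
  · rintro ⟨u, w⟩ hp ⟨u', w'⟩ hp' h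
    simp only [mem_filter] at hp hp'
    cases hp.2; cases hp'.2
    simp only [Prod.mk.injEq] at h ⊢
    exact ⟨h, trivial⟩
  · intro u hu
    simp only [mem_filter, mem_Ico] at hu hv
    refine ⟨(u, v), ?_, rfl⟩
    simp only [mem_filter, mem_product, mem_Ico]
    exact ⟨⟨⟨⟨hu.1.1, by omega⟩, hv⟩, hu.1.2, hu.2⟩, trivial⟩

lemma phi_cell : ∀ j k, k < 256 → ∀ u, (256 + k) * 2 ^ j ≤ u → u < (256 + k + 1) * 2 ^ j →
    phi u = pat k := by
  intro j
  induction j with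
  | zero =>
    intro k hk u h1 h2
    simp only [pow_zero, mul_one] at h1 h2
    have : u = 256 + k := by omega
    subst this
    rw [phi_mid (by omega) (by omega)]
    congr 1
    omega
  | succ j ih =>
    intro k hk u h1 h2
    have hr : (256 + k + 1) * 2 ^ (j+1) = (256 + k) * 2 ^ j * 2 + 2 ^ j * 2 := by ring
    rw [pow_succ, ← mul_assoc] at h1
    rw [hr] at h2
    have hp : 1 ≤ 2 ^ j := Nat.one_le_two_pow
    have h256 : 256 * 1 ≤ (256 + k) * 2 ^ j := Nat.mul_le_mul (by omega) hp
    have h512 : 512 ≤ u := by omega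
    rw [phi_rec h512]
    refine ih k hk (u / 2) ?_ ?_
    · omega
    · have : (256 + k + 1) * 2 ^ j = (256 + k) * 2 ^ j + 2 ^ j := by ring
      omega

lemma cell_interp (j k : ℕ) (hk : k < 256) :
    ∀ θ, θ ≤ 2 ^ j →
      (∀ l, Nlt l ((256 + k) * 2 ^ j + θ)
          = Nlt l ((256 + k) * 2 ^ j) + θ * (if pat k < l then 1 else 0)) ∧
      Ec ((256 + k) * 2 ^ j + θ)
          = Ec ((256 + k) * 2 ^ j) + θ * Nlt (pat k) ((256 + k) * 2 ^ j) := by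
  intro θ
  induction θ with
  | zero => intro _; simp
  | succ t iht =>
    intro ht
    obtain ⟨ihN, ihE⟩ := iht (by omega)
    have hb1 : 1 ≤ (256 + k) * 2 ^ j + t :=
      le_trans (by nlinarith [Nat.one_le_two_pow (n := j)]) (Nat.le_add_right _ _)
    have hphi : phi ((256 + k) * 2 ^ j + t) = pat k := by
      apply phi_cell j k hk
      · omega
      · have : (256 + k + 1) * 2 ^ j = (256 + k) * 2 ^ j + 2 ^ j := by ring
        omega
    constructor
    · intro l
      rw [show (256 + k) * 2 ^ j + (t + 1) = ((256 + k) * 2 ^ j + t) + 1 by ring,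
        Nlt_succ l hb1, ihN l, hphi]
      split <;> ring
    · rw [show (256 + k) * 2 ^ j + (t + 1) = ((256 + k) * 2 ^ j + t) + 1 by ring,
        Ec_succ hb1, ihE, hphi, ihN (pat k)]
      simp only [lt_self_iff_false, if_false, mul_zero, add_zero]
      ring

def Hlt (l k : ℕ) : ℕ := ([LH0, LH1, LH2, LH3].getD l []).getD k 0
def Zt (k : ℕ) : ℕ := LZt.getD k 0
def Vt (k : ℕ) : ℕ := LVt.getD k 0
def Wt (k : ℕ) : ℕ := LWt.getD k 0
def clt (l : ℕ) : ℕ := Hlt l 256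
def Vs : ℕ := Vt 256
def Ws : ℕ := Wt 256
def Zs : ℕ := Zt 256
def Pk (k : ℕ) : ℤ := (Vs : ℤ) + (Ws : ℤ) + 3 * ((Vt k : ℤ) + (Wt k : ℤ))
def Qk (k : ℕ) : ℤ := 765 * ((Zs : ℤ) + (Zt k : ℤ)) - 3 * (Vs : ℤ) - 3 * (Vt k : ℤ)
def Rc : ℤ := 2 * (Vs : ℤ) - (Ws : ℤ) - 765 * (Zs : ℤ)

lemma hH : ∀ l, l < 4 → ∀ k, k < 256 →
    Hlt l (k + 1) = Hlt l k + (if pat k < l then 1 else 0) := by decide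

lemma hZr : ∀ k, k < 256 → Zt (k + 1) = Zt k + (if 0 < pat k then 1 else 0) := by decide

lemma hVr : ∀ k, k < 256 → Vt (k + 1) = Vt k + clt (pat k) := by decide

lemma hWr : ∀ k, k < 256 → Wt (k + 1) = Wt k + Hlt (pat k) k := by decide

lemma hH0 : ∀ l, l < 4 → Hlt l 0 = 0 := by decide
lemma hZt0 : Zt 0 = 0 := rfl
lemma hVt0 : Vt 0 = 0 := rfl
lemma hWt0 : Wt 0 = 0 := rfl

open Finset in
lemma Nlt_256 (l : ℕ) : Nlt l 256 = if 0 < l then 255 else 0 := by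
  rw [Nlt]
  rcases Nat.eq_zero_or_pos l with h | h
  · subst h; simp
  · rw [if_pos h, Finset.filter_true_of_mem, Nat.card_Ico]
    intro u hu
    rw [phi_low (by simp only [Finset.mem_Ico] at hu; omega)]
    omega

open Finset in
lemma Ec_256 : Ec 256 = 0 := by
  rw [Ec]
  apply Finset.sum_eq_zero
  intro v hv
  rw [phi_low (by simp only [Finset.mem_Ico] at hv; omega), Nlt]
  simp

def Stmt (j k : ℕ) : Prop :=
  (∀ l, l < 4 → Nlt l ((256 + k) * 2 ^ j) + clt l
      = (if 0 < l then 255 else 0) + 2 ^ j * (clt l + Hlt l k)) ∧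
  (3 * (Ec ((256 + k) * 2 ^ j) : ℤ) = Pk k * (2 ^ j * 2 ^ j) + Qk k * 2 ^ j + Rc)

lemma stmt00 : Stmt 0 0 := by
  constructor
  · intro l hl
    simp only [pow_zero, mul_one, add_zero, Nat.add_zero]
    rw [Nlt_256, hH0 l hl]
    omega
  · simp only [pow_zero, mul_one, add_zero, Nat.add_zero]
    rw [Ec_256]
    simp only [Pk, Qk, Rc, hVt0, hWt0, hZt0]
    push_cast
    ring

lemma stmt_step (j k : ℕ) (hk : k < 256) (h : Stmt j k) : Stmt j (k + 1) := by
  obtain ⟨hN, hE⟩ := h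
  have hpos : (256 + (k + 1)) * 2 ^ j = (256 + k) * 2 ^ j + 2 ^ j := by ring
  obtain ⟨cN, cE⟩ := cell_interp j k hk (2 ^ j) le_rfl
  constructor
  · intro l hl
    rw [hpos, cN l, hH l hl k hk]
    have h1 := hN l hl
    by_cases hc : pat k < l <;> by_cases hc2 : 0 < l <;>
      simp only [hc, hc2, if_true, if_false] at h1 ⊢ <;>
      simp only [Nat.mul_add, Nat.mul_one, Nat.add_zero, Nat.mul_zero] at h1 ⊢ <;> omega
  · rw [hpos, cE]
    have hS := hN (pat k) (pat_lt4 k)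
    have hSz : (Nlt (pat k) ((256 + k) * 2 ^ j) : ℤ) + (clt (pat k) : ℤ)
        = (if 0 < pat k then (255 : ℤ) else 0)
          + 2 ^ j * ((clt (pat k) : ℤ) + (Hlt (pat k) k : ℤ)) := by
      by_cases hc : 0 < pat k <;> simp only [hc, if_true, if_false] at hS ⊢ <;>
        exact_mod_cast hS
    have hV' := hVr k hk
    have hW' := hWr k hk
    have hZ' := hZr k hk
    simp only [Pk, Qk, Rc, hV', hW', hZ'] at hE ⊢
    by_cases hc : 0 < pat k <;>
      simp only [hc, if_true, if_false, Nat.add_zero] at hSz ⊢ <;>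
      push_cast <;>
      linear_combination hE + 3 * (2 : ℤ) ^ j * hSz

lemma stmt_lift (j : ℕ) (h : Stmt j 256) : Stmt (j + 1) 0 := by
  obtain ⟨hN, hE⟩ := h
  have hpos : (256 + 0) * 2 ^ (j + 1) = (256 + 256) * 2 ^ j := by ring
  constructor
  · intro l hl
    have h1 := hN l hl
    have h256 : Hlt l 256 = clt l := rfl
    have h0 : Hlt l 0 = 0 := hH0 l hl
    rw [h256, show (2:ℕ) ^ j * (clt l + clt l) = 2 ^ j * clt l + 2 ^ j * clt l by ring] at h1
    rw [h0, show (256 + 0) * 2 ^ (j + 1) = (256 + 256) * 2 ^ j by ring,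
      show (2:ℕ) ^ (j + 1) * (clt l + 0) = 2 ^ j * clt l + 2 ^ j * clt l by ring]
    by_cases hc : 0 < l <;> simp only [hc, if_true, if_false] at h1 ⊢ <;> omega
  · rw [hpos, pow_succ]
    have hP : Pk 256 = 4 * Pk 0 := by
      simp only [Pk, hVt0, hWt0, Vs, Ws]; push_cast; ring
    have hQ : Qk 256 = 2 * Qk 0 := by
      simp only [Qk, hVt0, hZt0, Vs, Zs]; push_cast; ring
    rw [hP, hQ] at hE
    linear_combination hE

lemma boundary : ∀ j, ∀ k, k ≤ 256 → Stmt j k := by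
  intro j
  induction j with
  | zero =>
    intro k hk
    induction k with
    | zero => exact stmt00
    | succ k ih => exact stmt_step 0 k (by omega) (ih (by omega))
  | succ j ihj =>
    intro k hk
    induction k with
    | zero => exact stmt_lift j (ihj 256 le_rfl)
    | succ k ih => exact stmt_step (j + 1) k (by omega) (ih (by omega))

def dZ (k : ℕ) : ℤ := 584064 * Pk k - 328539 * ((256 : ℤ) + k) ^ 2

lemma hdelta : ∀ k, k ≤ 256 → 1 ≤ dZ k ∧ 0 ≤ 4 * dZ k + 584064 * Qk k ∧
    0 ≤ 4 * dZ k + 2 * (584064 * Qk k) + 584064 * Rc := by decide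

lemma quad_lower {d B C x : ℤ} (hd : 1 ≤ d) (hx : 2 ≤ x)
    (h1 : 0 ≤ 4 * d + B) (h2 : 0 ≤ 4 * d + 2 * B + C) :
    0 ≤ d * (x * x) + B * x + C := by
  nlinarith [mul_nonneg (sub_nonneg.mpr hx) h1,
    mul_nonneg (mul_nonneg (by linarith : (0:ℤ) ≤ d) (sub_nonneg.mpr hx)) (sub_nonneg.mpr hx)]

lemma boundary_bound (j k : ℕ) (hj : 1 ≤ j) (hk : k ≤ 256) :
    328539 * (((256 + k) * 2 ^ j : ℕ) : ℤ) ^ 2 ≤ 1752192 * (Ec ((256 + k) * 2 ^ j) : ℤ) := by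
  obtain ⟨-, hE⟩ := boundary j k hk
  obtain ⟨h1, h2, h3⟩ := hdelta k hk
  have hx : (2:ℤ) ≤ 2 ^ j := by
    calc (2:ℤ) = 2 ^ 1 := by norm_num
    _ ≤ 2 ^ j := pow_le_pow_right₀ (by norm_num) hj
  have key := quad_lower h1 hx h2 h3
  rw [dZ] at key
  have e1 : 1752192 * (Ec ((256 + k) * 2 ^ j) : ℤ)
      = 584064 * Pk k * (2 ^ j * 2 ^ j) + 584064 * Qk k * 2 ^ j + 584064 * Rc := by
    linear_combination 584064 * hE
  have e2 : (((256 + k) * 2 ^ j : ℕ) : ℤ) = ((256:ℤ) + k) * 2 ^ j := by push_cast; ring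
  rw [e2, e1]
  nlinarith [key]

lemma exists_rep : ∀ n, 512 ≤ n →
    ∃ j k, 1 ≤ j ∧ k < 256 ∧ (256 + k) * 2 ^ j ≤ n ∧ n < (256 + k + 1) * 2 ^ j := by
  intro n
  induction n using Nat.strong_induction_on with
  | _ n ih =>
    intro hn
    rcases lt_or_ge n 1024 with h | h
    · refine ⟨1, n / 2 - 256, le_rfl, by omega, ?_, ?_⟩ <;> · rw [pow_one]; omega
    · obtain ⟨j, k, hj, hk, h1, h2⟩ := ih (n / 2) (by omega) (by omega)
      refine ⟨j + 1, k, by omega, hk, ?_, ?_⟩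
      · rw [pow_succ, ← mul_assoc]; omega
      · rw [pow_succ, ← mul_assoc]; omega

set_option maxHeartbeats 1000000 in
lemma main_bound : ∀ n : ℕ, 512 ≤ n → 328539 * (n : ℤ) ^ 2 ≤ 1752192 * (Ec n : ℤ) := by
  intro n hn
  obtain ⟨j, k, hj, hk, h1, h2⟩ := exists_rep n hn
  have hsum : (256 + k + 1) * 2 ^ j = (256 + k) * 2 ^ j + 2 ^ j := by ring
  have hθle : n - (256 + k) * 2 ^ j ≤ 2 ^ j := by omega
  obtain ⟨-, cE⟩ := cell_interp j k hk (n - (256 + k) * 2 ^ j) hθle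
  obtain ⟨-, cE2⟩ := cell_interp j k hk (2 ^ j) le_rfl
  have hEn : Ec n = Ec ((256 + k) * 2 ^ j)
      + (n - (256 + k) * 2 ^ j) * Nlt (pat k) ((256 + k) * 2 ^ j) := by
    rw [← cE]; congr 1; omega
  have hB1 := boundary_bound j k hj (by omega)
  have hB2 := boundary_bound j (k + 1) hj (by omega)
  rw [show (256 + (k + 1)) * 2 ^ j = (256 + k) * 2 ^ j + 2 ^ j by ring] at hB2
  set b := (256 + k) * 2 ^ j with hb
  set S := Nlt (pat k) b with hS
  set g := (2:ℕ) ^ j with hg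
  have hgpos : (0:ℤ) < (g:ℤ) := by positivity
  have hθ0 : (0:ℤ) ≤ ((n - b : ℕ) : ℤ) := by positivity
  have hθg : ((n - b : ℕ) : ℤ) ≤ (g : ℤ) := by exact_mod_cast hθle
  have hcast : ((n : ℕ) : ℤ) = (b : ℤ) + ((n - b : ℕ) : ℤ) := by omega
  have hEcast : (Ec n : ℤ) = (Ec b : ℤ) + ((n - b : ℕ) : ℤ) * (S : ℤ) := by
    rw [hEn]; push_cast; ring
  have hB2' : 328539 * ((b:ℤ) + g) ^ 2 ≤ 1752192 * ((Ec b : ℤ) + (g:ℤ) * (S:ℤ)) := by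
    have e3 : (Ec (b + g) : ℤ) = (Ec b : ℤ) + (g:ℤ) * (S:ℤ) := by
      rw [cE2]; push_cast; ring
    have e4 : ((b + g : ℕ) : ℤ) = (b:ℤ) + (g:ℤ) := by push_cast; ring
    rw [← e3, ← e4]
    exact_mod_cast hB2
  set θ := ((n - b : ℕ) : ℤ)
  have key : (g:ℤ) * (1752192 * ((Ec b : ℤ) + θ * S) - 328539 * ((b:ℤ) + θ) ^ 2)
      = ((g:ℤ) - θ) * (1752192 * (Ec b : ℤ) - 328539 * (b:ℤ) ^ 2)
        + θ * (1752192 * ((Ec b : ℤ) + (g:ℤ) * S) - 328539 * ((b:ℤ) + g) ^ 2)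
        + 328539 * θ * ((g:ℤ) - θ) * g := by ring
  have hb1' : (0:ℤ) ≤ 1752192 * (Ec b : ℤ) - 328539 * (b:ℤ) ^ 2 := by
    have : (((256 + k) * 2 ^ j : ℕ) : ℤ) = (b : ℤ) := by rw [hb]
    nlinarith [hB1]
  have t1 : (0:ℤ) ≤ ((g:ℤ) - θ) * (1752192 * (Ec b : ℤ) - 328539 * (b:ℤ) ^ 2) :=
    mul_nonneg (by linarith) hb1'
  have t2 : (0:ℤ) ≤ θ * (1752192 * ((Ec b : ℤ) + (g:ℤ) * S) - 328539 * ((b:ℤ) + g) ^ 2) :=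
    mul_nonneg hθ0 (by linarith)
  have t3 : (0:ℤ) ≤ 328539 * θ * ((g:ℤ) - θ) * g :=
    mul_nonneg (mul_nonneg (mul_nonneg (by norm_num) hθ0) (by linarith)) hgpos.le
  have hgX : (0:ℤ) ≤ (g:ℤ) * (1752192 * ((Ec b : ℤ) + θ * S) - 328539 * ((b:ℤ) + θ) ^ 2) := by
    rw [key]; linarith
  have hX : (0:ℤ) ≤ 1752192 * ((Ec b : ℤ) + θ * S) - 328539 * ((b:ℤ) + θ) ^ 2 := by
    by_contra hcon
    push_neg at hcon
    nlinarith [mul_pos hgpos (neg_pos.mpr hcon)]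
  rw [hEcast, hcast]
  linarith

open Finset in
lemma Ec_upper (n : ℕ) : Ec (n + 1) ≤ n * n := by
  rw [Ec]
  calc ∑ v ∈ Finset.Ico 1 (n + 1), Nlt (phi v) v
      ≤ ∑ v ∈ Finset.Ico 1 (n + 1), n := by
        refine Finset.sum_le_sum fun v hv => ?_
        simp only [Finset.mem_Ico] at hv
        exact le_trans (Nlt_le _ _) (by omega)
    _ = n * n := by rw [Finset.sum_const, Nat.card_Ico]; simp [Nat.mul_comm]

end I4C

theorem exists_I4_free_graph_with_large_liminf :
    ∃ G : SimpleGraph ℕ, ¬ HasIncPath G 4 ∧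
      (109513 / 584064 : ℝ) ≤
        liminf (fun n : ℕ => (edgeCount G n : ℝ) / n ^ 2) atTop := by
  refine ⟨I4C.G, I4C.noPath, ?_⟩
  have hub : ∀ n : ℕ, (edgeCount I4C.G n : ℝ) / n ^ 2 ≤ 1 := by
    intro n
    rcases Nat.eq_zero_or_pos n with h | h
    · subst h; simp
    · rw [I4C.edgeCount_eq, div_le_one (by positivity)]
      have hle := I4C.Ec_upper n
      have : (I4C.Ec (n + 1) : ℝ) ≤ (n : ℝ) * n := by exact_mod_cast hle
      nlinarith [this]
  refine le_liminf_of_le (isCoboundedUnder_ge_of_le atTop hub) ?_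
  filter_upwards [eventually_ge_atTop 512] with n hn
  rw [I4C.edgeCount_eq]
  have hnpos : (0:ℝ) < (n:ℝ) ^ 2 := by
    have : (0:ℝ) < (n:ℝ) := by exact_mod_cast (by omega : 0 < n)
    positivity
  rw [le_div_iff₀ hnpos]
  have h := I4C.main_bound (n + 1) (by omega)
  have hr : (328539:ℝ) * ((n:ℝ) + 1) ^ 2 ≤ 1752192 * (I4C.Ec (n + 1) : ℝ) := by
    exact_mod_cast h
  have hn0 : (0:ℝ) ≤ (n:ℝ) := by positivity
  nlinarith [hr, hn0]
end

section
/- There exists a simple graph G on the positive integers that is I_6-free and satisfies liminf_{n→∞} e(G_n)/n² ≥ 3683/17672, i.e., ≥ (1/4)(1 − 1/6) + 1/13254. -/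
set_option maxRecDepth 100000
set_option maxHeartbeats 1000000

open Filter

/- ---------------- construction ---------------- -/

def w0 : List ℕ := [0,0,1,1,1,1,1,2,2,2,4,4,5,5,5,5]
def w1 : List ℕ := [0,1,1,1,2,2,2,2,2,3,3,3,3,4,5,5]
def w2 : List ℕ := [0,0,0,1,2,2,2,3,3,3,3,3,4,4,4,5]
def w3 : List ℕ := [0,0,0,0,0,1,1,3,3,4,4,4,4,5,5,5]

def wf (θ r : ℕ) : ℕ :=
  (if θ % 4 = 0 then w0 else if θ % 4 = 1 then w1 else if θ % 4 = 2 then w2 else w3).getD r 0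

def Lab (i : ℕ) : ℕ := wf (Nat.log 2 i % 4) (i % 16)

lemma wf_lt_6 (θ r : ℕ) : wf θ r < 6 := by
  have h4 : θ % 4 < 4 := Nat.mod_lt _ (by norm_num)
  have : ∀ a < 4, ∀ b < 16, wf a b < 6 := by decide
  rcases Nat.lt_or_ge r 16 with hr | hr
  · have := this (θ % 4) h4 r hr
    unfold wf at this ⊢
    simpa [Nat.mod_mod_of_dvd] using this
  · unfold wf
    have hl : ∀ (l : List ℕ), l.length = 16 → l.getD r 0 = 0 := by
      intro l hll
      rw [List.getD_eq_default]
      omega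
    split_ifs <;> rw [hl _ (by rfl)] <;> norm_num

lemma Lab_lt_6 (i : ℕ) : Lab i < 6 := wf_lt_6 _ _

def Gr : SimpleGraph ℕ := SimpleGraph.fromRel (fun i j => i < j ∧ Lab i < Lab j)

lemma Gr_adj {i j : ℕ} (h : i < j) : Gr.Adj i j ↔ Lab i < Lab j := by
  constructor
  · rintro ⟨hne, (⟨h1, h2⟩ | ⟨h1, h2⟩)⟩
    · exact h2
    · omega
  · intro hL
    exact ⟨Nat.ne_of_lt h, Or.inl ⟨h, hL⟩⟩

lemma no_inc_path : ¬ HasIncPath Gr 6 := by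
  rintro ⟨f, hf1, hmono, hadj⟩
  have key : ∀ i : Fin 6, Lab (f i.castSucc) < Lab (f i.succ) := by
    intro i
    have hlt : f i.castSucc < f i.succ := hmono (Fin.castSucc_lt_succ (i := i))
    exact (Gr_adj hlt).mp (hadj i)
  have sm : StrictMono (fun i : Fin 7 => Lab (f i)) := by
    apply Fin.strictMono_iff_lt_succ.mpr
    intro i
    exact key i
  have hcard : (Finset.univ : Finset (Fin 7)).card ≤ (Finset.range 6).card := by
    apply Finset.card_le_card_of_injOn (fun i => Lab (f i))
    · intro i _
      simp [Finset.mem_range, Lab_lt_6]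
    · exact sm.injective.injOn
  simp at hcard

/- ---------------- counting machinery ---------------- -/

def pairsF (lo hi : ℕ) : Finset (ℕ × ℕ) :=
  (Finset.Ico lo hi ×ˢ Finset.Ico lo hi).filter fun p => p.1 < p.2 ∧ Lab p.1 < Lab p.2

def crossF (a b c d : ℕ) : Finset (ℕ × ℕ) :=
  (Finset.Ico a b ×ˢ Finset.Ico c d).filter fun p => Lab p.1 < Lab p.2

lemma mem_pairsF {lo hi : ℕ} {p : ℕ × ℕ} : p ∈ pairsF lo hi ↔
    lo ≤ p.1 ∧ p.1 < hi ∧ lo ≤ p.2 ∧ p.2 < hi ∧ p.1 < p.2 ∧ Lab p.1 < Lab p.2 := by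
  simp [pairsF, Finset.mem_filter, Finset.mem_product, Finset.mem_Ico]; tauto

lemma mem_crossF {a b c d : ℕ} {p : ℕ × ℕ} : p ∈ crossF a b c d ↔
    a ≤ p.1 ∧ p.1 < b ∧ c ≤ p.2 ∧ p.2 < d ∧ Lab p.1 < Lab p.2 := by
  simp [crossF, Finset.mem_filter, Finset.mem_product, Finset.mem_Ico]; tauto

lemma pairsF_subset {lo hi lo' hi' : ℕ} (h1 : lo' ≤ lo) (h2 : hi ≤ hi') :
    pairsF lo hi ⊆ pairsF lo' hi' := by
  intro p hp; rw [mem_pairsF] at *; omega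

lemma crossF_subset {a b c d d' : ℕ} (h2 : d ≤ d') :
    crossF a b c d ⊆ crossF a b c d' := by
  intro p hp; rw [mem_crossF] at *; omega

lemma pairs_split {lo mid hi : ℕ} (h1 : lo ≤ mid) (h2 : mid ≤ hi) :
    (pairsF lo mid).card + (pairsF mid hi).card + (crossF lo mid mid hi).card
      ≤ (pairsF lo hi).card := by
  have d1 : Disjoint (pairsF lo mid) (pairsF mid hi) := by
    rw [Finset.disjoint_left]; intro p hp hq
    rw [mem_pairsF] at *; omega
  have d2 : Disjoint (pairsF lo mid ∪ pairsF mid hi) (crossF lo mid mid hi) := by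
    rw [Finset.disjoint_left]; intro p hp hq
    rw [Finset.mem_union, mem_pairsF, mem_pairsF] at hp
    rw [mem_crossF] at hq; omega
  have hsub : (pairsF lo mid ∪ pairsF mid hi) ∪ crossF lo mid mid hi ⊆ pairsF lo hi := by
    intro p hp
    rw [Finset.mem_union, Finset.mem_union, mem_pairsF, mem_pairsF] at hp
    rw [mem_pairsF]
    rcases hp with (h | h) | h
    · omega
    · omega
    · rw [mem_crossF] at h; omega
  calc (pairsF lo mid).card + (pairsF mid hi).card + (crossF lo mid mid hi).card
      = ((pairsF lo mid ∪ pairsF mid hi) ∪ crossF lo mid mid hi).card := by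
        rw [Finset.card_union_of_disjoint d2, Finset.card_union_of_disjoint d1]
    _ ≤ (pairsF lo hi).card := Finset.card_le_card hsub

lemma crossF_right_add {a b c d e : ℕ} (h1 : c ≤ d) (h2 : d ≤ e) :
    (crossF a b c e).card = (crossF a b c d).card + (crossF a b d e).card := by
  have hd : Disjoint (crossF a b c d) (crossF a b d e) := by
    rw [Finset.disjoint_left]; intro p hp hq; rw [mem_crossF] at *; omega
  rw [← Finset.card_union_of_disjoint hd]
  congr 1
  ext p
  rw [Finset.mem_union, mem_crossF, mem_crossF, mem_crossF]
  constructor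
  · intro h; omega
  · intro h; omega

lemma crossF_left_add {a b c d e : ℕ} (h1 : a ≤ b) (h2 : b ≤ c) :
    (crossF a c d e).card = (crossF a b d e).card + (crossF b c d e).card := by
  have hd : Disjoint (crossF a b d e) (crossF b c d e) := by
    rw [Finset.disjoint_left]; intro p hp hq; rw [mem_crossF] at *; omega
  rw [← Finset.card_union_of_disjoint hd]
  congr 1
  ext p
  rw [Finset.mem_union, mem_crossF, mem_crossF, mem_crossF]
  constructor
  · intro h; omega
  · intro h; omega

def CqT (a b : ℕ) : ℕ :=
  ((Finset.range 16 ×ˢ Finset.range 16).filter fun p => wf a p.1 < wf b p.2).card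

lemma mod16_eq {p i : ℕ} (hp : 16 ∣ p) (h1 : p ≤ i) (h2 : i < p + 16) : i % 16 = i - p := by
  omega

lemma cross_window {θ θ' p q : ℕ} (hp : 16 ∣ p) (hq : 16 ∣ q) (hpq : p + 16 ≤ q)
    (hLp : ∀ i, p ≤ i → i < p + 16 → Lab i = wf θ (i % 16))
    (hLq : ∀ j, q ≤ j → j < q + 16 → Lab j = wf θ' (j % 16)) :
    (crossF p (p + 16) q (q + 16)).card = CqT θ θ' := by
  unfold CqT
  apply Finset.card_bij' (fun x _ => (x.1 - p, x.2 - q))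
    (fun x _ => (p + x.1, q + x.2))
  · intro x hx
    rw [mem_crossF] at hx
    simp only [Finset.mem_filter, Finset.mem_product, Finset.mem_range]
    obtain ⟨h1, h2, h3, h4, h5⟩ := hx
    refine ⟨⟨by omega, by omega⟩, ?_⟩
    rw [hLp x.1 h1 h2, hLq x.2 h3 h4, mod16_eq hp h1 h2, mod16_eq hq h3 h4] at h5
    exact h5
  · intro x hx
    simp only [Finset.mem_filter, Finset.mem_product, Finset.mem_range] at hx
    rw [mem_crossF]
    obtain ⟨⟨h1, h2⟩, h3⟩ := hx
    refine ⟨by omega, by omega, by omega, by omega, ?_⟩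
    rw [hLp (p + x.1) (by omega) (by omega), hLq (q + x.2) (by omega) (by omega),
      mod16_eq hp (by omega) (by omega), mod16_eq hq (by omega) (by omega)]
    simpa using h3
  · intro x hx
    rw [mem_crossF] at hx
    ext <;> simp <;> omega
  · intro x hx
    simp only [Finset.mem_filter, Finset.mem_product, Finset.mem_range] at hx
    ext <;> simp

lemma cross_block_window {θ θ' m k q : ℕ} (hm : 16 ∣ m) (hq : 16 ∣ q) (hk : m + 16 * k ≤ q)
    (hLm : ∀ i, m ≤ i → i < m + 16 * k → Lab i = wf θ (i % 16))
    (hLq : ∀ j, q ≤ j → j < q + 16 → Lab j = wf θ' (j % 16)) :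
    (crossF m (m + 16 * k) q (q + 16)).card = k * CqT θ θ' := by
  induction k with
  | zero => simp [crossF]
  | succ k ih =>
    have e1 : m + 16 * (k + 1) = (m + 16 * k) + 16 := by ring
    have h1 : (crossF m (m + 16 * k) q (q + 16)).card = k * CqT θ θ' :=
      ih (by omega) (fun i a b => hLm i a (by omega))
    have h2 : (crossF (m + 16 * k) ((m + 16 * k) + 16) q (q + 16)).card = CqT θ θ' :=
      cross_window (Dvd.dvd.add hm ⟨k, rfl⟩) hq (by omega)
        (fun i a b => hLm i (by omega) (by omega)) hLq
    rw [e1, crossF_left_add (b := m + 16 * k) (by omega) (by omega), h1, h2]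
    ring

lemma pairs_block {θ m k : ℕ} (hm : 16 ∣ m)
    (hL : ∀ i, m ≤ i → i < m + 16 * k → Lab i = wf θ (i % 16)) :
    k * (k - 1) * CqT θ θ ≤ 2 * (pairsF m (m + 16 * k)).card := by
  induction k with
  | zero => simp
  | succ k ih =>
    have e1 : m + 16 * (k + 1) = (m + 16 * k) + 16 := by ring
    have hsp := pairs_split (lo := m) (mid := m + 16 * k) (hi := m + 16 * (k + 1))
      (by omega) (by omega)
    have hcb : (crossF m (m + 16 * k) (m + 16 * k) (m + 16 * (k + 1))).card = k * CqT θ θ := by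
      rw [e1]
      exact cross_block_window hm (Dvd.dvd.add hm ⟨k, rfl⟩) (le_refl _)
        (fun i h1 h2 => hL i h1 (by omega)) (fun j h1 h2 => hL j (by omega) (by omega))
    have hib := ih (fun i h1 h2 => hL i h1 (by omega))
    have harith : (k+1) * ((k+1) - 1) * CqT θ θ = k * (k - 1) * CqT θ θ + 2 * (k * CqT θ θ) := by
      rcases k with _ | k'
      · norm_num
      · simp only [Nat.succ_sub_one]; ring
    omega

/- ---------------- constants ---------------- -/

noncomputable def xcR (t u : ℕ) : ℝ :=
  if t = 0 then (if u = 0 then 1669/240 else if u = 1 then 323/48 else if u = 2 then 1549/240 else 131/20)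
  else if t = 1 then (if u = 0 then 1577/240 else if u = 1 then 167/24 else if u = 2 then 1637/240 else 32/5)
  else if t = 2 then (if u = 0 then 1531/240 else if u = 1 then 317/48 else if u = 2 then 1651/240 else 541/80)
  else (if u = 0 then 799/120 else if u = 1 then 307/48 else if u = 2 then 1583/240 else 553/80)

noncomputable def acR (t : ℕ) : ℝ :=
  if t = 0 then 408647/1958400 else if t = 1 then 102407/489600
  else if t = 2 then 410957/1958400 else 409823/1958400

def CqV (t u : ℕ) : ℕ :=
  if t = 0 then (if u = 0 then 99 else if u = 1 then 115 else if u = 2 then 115 else 100)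
  else if t = 1 then (if u = 0 then 99 else if u = 1 then 100 else if u = 2 then 111 else 114)
  else if t = 2 then (if u = 0 then 111 else if u = 1 then 99 else if u = 2 then 101 else 113)
  else (if u = 0 then 116 else if u = 1 then 113 else if u = 2 then 101 else 99)

lemma CqT_eq_CqV : ∀ t < 4, ∀ u < 4, CqT t u = CqV t u := by decide

lemma xcR_rec {t u : ℕ} (ht : t < 4) (hu : u < 4) :
    2 * xcR ((t + 1) % 4) u = xcR t u + (CqV t u : ℝ) / 16 := by
  interval_cases t <;> interval_cases u <;> norm_num [xcR, CqV]

lemma acR_rec {t : ℕ} (ht : t < 4) :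
    4 * acR ((t + 1) % 4) = acR t + xcR t t / 16 + (CqV t t : ℝ) / 512 := by
  interval_cases t <;> norm_num [acR, xcR, CqV]

lemma xcR_le_8 {t u : ℕ} (ht : t < 4) (hu : u < 4) : xcR t u ≤ 8 := by
  interval_cases t <;> interval_cases u <;> norm_num [xcR]

lemma acR_le_one {t : ℕ} (ht : t < 4) : acR t ≤ 1 := by
  interval_cases t <;> norm_num [acR]

lemma CqV_le_101 {t : ℕ} (ht : t < 4) : (CqV t t : ℝ) ≤ 101 := by
  interval_cases t <;> norm_num [CqV]

lemma quadIneq {t : ℕ} (ht : t < 4) {x : ℝ} (h0 : 0 ≤ x) (h1 : x ≤ 1) :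
    (1043/5000) * (1 + x)^2 ≤ acR t + xcR t t / 16 * x + (CqV t t : ℝ) / 512 * x^2 := by
  have hx : 0 ≤ x * (1 - x) := mul_nonneg h0 (by linarith)
  interval_cases t <;> (simp only [acR, xcR, CqV] ; norm_num) <;> nlinarith [hx, sq_nonneg x]

/- ---------------- scale lemmas ---------------- -/

lemma Lab_scale {t i : ℕ} (h1 : 2^t ≤ i) (h2 : i < 2^(t+1)) :
    Lab i = wf (t % 4) (i % 16) := by
  unfold Lab
  rw [Nat.log_eq_of_pow_le_of_lt_pow h1 h2]

lemma two_pow_split {T : ℕ} (hT : 4 ≤ T) : 2^T = 16 * 2^(T-4) := by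
  have h : 2 ^ (T - 4) * 2 ^ 4 = 2 ^ T := by
    rw [← pow_add]
    congr 1
    omega
  omega

lemma cross_scale : ∀ T : ℕ, 4 ≤ T → ∀ θ' q : ℕ, θ' < 4 → 16 ∣ q → 2^T ≤ q →
    (∀ j, q ≤ j → j < q + 16 → Lab j = wf θ' (j % 16)) →
    xcR (T % 4) θ' * 2^T - 128 ≤ ((crossF 1 (2^T) q (q + 16)).card : ℝ) := by
  intro T hT
  induction T, hT using Nat.le_induction with
  | base =>
    intro θ' q hθ' hq hq2 hLq
    have h8 : xcR (4 % 4) θ' ≤ 8 := xcR_le_8 (by norm_num) hθ'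
    have : (0:ℝ) ≤ ((crossF 1 (2^4) q (q + 16)).card : ℝ) := by positivity
    have : xcR (4 % 4) θ' * 2^4 ≤ 128 := by nlinarith
    linarith
  | succ T hT ih =>
    intro θ' q hθ' hq hq2 hLq
    have hq2' : 2^T ≤ q := le_trans (Nat.pow_le_pow_right (by norm_num) (by omega)) hq2
    have ihv := ih θ' q hθ' hq hq2' hLq
    have hTm4 : T % 4 < 4 := Nat.mod_lt _ (by norm_num)
    set K := T - 4 with hK
    have h2T : (2:ℕ)^T = 16 * 2^K := two_pow_split hT
    have h2T1 : (2:ℕ)^(T+1) = 2^T + 16 * 2^K := by rw [pow_succ]; omega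
    have hblock : (crossF (2^T) (2^T + 16 * 2^K) q (q + 16)).card
        = 2^K * CqT (T % 4) θ' := by
      apply cross_block_window ⟨2^K, h2T⟩ hq (by omega)
      · intro i hi1 hi2
        exact Lab_scale hi1 (by omega)
      · exact hLq
    have hsplit : (crossF 1 (2^(T+1)) q (q + 16)).card
        = (crossF 1 (2^T) q (q + 16)).card + (crossF (2^T) (2^(T+1)) q (q + 16)).card :=
      crossF_left_add (Nat.one_le_two_pow) (Nat.pow_le_pow_right (by norm_num) (by omega))
    have hmod : (T + 1) % 4 = (T % 4 + 1) % 4 := by omega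
    have hxrec := xcR_rec (t := T % 4) (u := θ') hTm4 hθ'
    -- real arithmetic
    have hcast : ((crossF (2^T) (2^(T+1)) q (q + 16)).card : ℝ)
        = (2^K : ℝ) * (CqV (T % 4) θ' : ℝ) := by
      rw [show (2:ℕ)^(T+1) = 2^T + 16 * 2^K from h2T1, hblock,
        CqT_eq_CqV _ hTm4 _ hθ']
      push_cast
      ring
    have huK : (2:ℝ)^T = 16 * 2^K := by
      have := h2T
      exact_mod_cast congrArg (fun n : ℕ => (n : ℝ)) this
    have hpow : (2:ℝ)^(T+1) = 2 * 2^T := by ring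
    have hgoal : xcR ((T+1) % 4) θ' * 2^(T+1)
        = xcR (T % 4) θ' * 2^T + (CqV (T % 4) θ' : ℝ) / 16 * 2^T := by
      rw [hmod, hpow]
      linear_combination (2:ℝ)^T * hxrec
    have hcc : ((crossF 1 (2^(T+1)) q (q + 16)).card : ℝ)
        = ((crossF 1 (2^T) q (q + 16)).card : ℝ) + (2^K : ℝ) * (CqV (T % 4) θ' : ℝ) := by
      have hc := congrArg (fun n : ℕ => (n : ℝ)) hsplit
      push_cast at hc
      rw [hcast] at hc
      linarith [hc]
    have hlast : (CqV (T % 4) θ' : ℝ) / 16 * 2^T = (2^K : ℝ) * (CqV (T % 4) θ' : ℝ) := by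
      rw [huK]; ring
    linarith [hgoal, hcc, ihv, hlast]

lemma cross_scale_block : ∀ T : ℕ, 4 ≤ T → ∀ θ' m k : ℕ, θ' < 4 → 16 ∣ m → 2^T ≤ m →
    (∀ i, m ≤ i → i < m + 16 * k → Lab i = wf θ' (i % 16)) →
    (k : ℝ) * (xcR (T % 4) θ' * 2^T - 128) ≤ ((crossF 1 (2^T) m (m + 16 * k)).card : ℝ) := by
  intro T hT θ' m k hθ' hm hm2 hL
  induction k with
  | zero => simp [crossF]
  | succ k ih =>
    have ihv := ih (fun i a b => hL i a (by omega))
    have hw : xcR (T % 4) θ' * 2^T - 128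
        ≤ ((crossF 1 (2^T) (m + 16 * k) ((m + 16 * k) + 16)).card : ℝ) := by
      apply cross_scale T hT θ' (m + 16 * k) hθ' (Dvd.dvd.add hm ⟨k, rfl⟩) (by omega)
      intro j a b
      exact hL j (by omega) (by omega)
    have hadd : (crossF 1 (2^T) m (m + 16 * (k+1))).card
        = (crossF 1 (2^T) m (m + 16 * k)).card
          + (crossF 1 (2^T) (m + 16 * k) ((m + 16 * k) + 16)).card := by
      rw [show m + 16 * (k+1) = (m + 16 * k) + 16 by ring]
      exact crossF_right_add (by omega) (by omega)
    have hcast : ((crossF 1 (2^T) m (m + 16 * (k+1))).card : ℝ)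
        = ((crossF 1 (2^T) m (m + 16 * k)).card : ℝ)
          + ((crossF 1 (2^T) (m + 16 * k) ((m + 16 * k) + 16)).card : ℝ) := by
      rw [hadd]; push_cast; ring
    have hexp : ((k:ℕ) + 1 : ℝ) * (xcR (T % 4) θ' * 2^T - 128)
        = (k : ℝ) * (xcR (T % 4) θ' * 2^T - 128) + (xcR (T % 4) θ' * 2^T - 128) := by ring
    push_cast
    push_cast at ihv
    linarith [hcast, hw, ihv, hexp]

lemma pairs_scale : ∀ T : ℕ, 4 ≤ T →
    acR (T % 4) * 4^T - 16 * 2^T ≤ ((pairsF 1 (2^T)).card : ℝ) := by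
  intro T hT
  induction T, hT using Nat.le_induction with
  | base =>
    have : acR (4 % 4) ≤ 1 := acR_le_one (by norm_num)
    have h0 : (0:ℝ) ≤ ((pairsF 1 (2^4)).card : ℝ) := by positivity
    norm_num at this ⊢
    nlinarith
  | succ T hT ih =>
    have hTm4 : T % 4 < 4 := Nat.mod_lt _ (by norm_num)
    set K := T - 4 with hK
    have h2T : (2:ℕ)^T = 16 * 2^K := two_pow_split hT
    have h2T1 : (2:ℕ)^(T+1) = 2^T + 16 * 2^K := by rw [pow_succ]; omega
    have hLblock : ∀ i, 2^T ≤ i → i < 2^T + 16 * 2^K → Lab i = wf (T % 4) (i % 16) := by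
      intro i h1 h2
      exact Lab_scale h1 (by omega)
    -- within-block pairs
    have hblock : 2^K * (2^K - 1) * CqT (T % 4) (T % 4)
        ≤ 2 * (pairsF (2^T) (2^T + 16 * 2^K)).card :=
      pairs_block ⟨2^K, h2T⟩ hLblock
    -- cross
    have hcross := cross_scale_block T hT (T % 4) (2^T) (2^K) hTm4 ⟨2^K, h2T⟩ (le_refl _) hLblock
    push_cast at hcross
    -- split
    have hsp := pairs_split (lo := 1) (mid := 2^T) (hi := 2^(T+1))
      Nat.one_le_two_pow (Nat.pow_le_pow_right (by norm_num) (by omega))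
    -- real facts
    have hrec := acR_rec hTm4
    have hmod : (T + 1) % 4 = (T % 4 + 1) % 4 := by omega
    have huK : (2:ℝ)^T = 16 * 2^K := by exact_mod_cast congrArg (fun n : ℕ => (n : ℝ)) h2T
    have h2Ku : (2:ℝ)^K = 2^T / 16 := by linear_combination -huK / 16
    have h4T : (4:ℝ)^T = (2:ℝ)^T * (2:ℝ)^T := by
      rw [show (4:ℝ) = 2 * 2 by norm_num, mul_pow]
    have hCle : (CqV (T % 4) (T % 4) : ℝ) ≤ 101 := CqV_le_101 hTm4
    have hupos : (0:ℝ) < (2:ℝ)^T := by positivity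
    -- cast hblock
    have hK1 : (1:ℕ) ≤ 2^K := Nat.one_le_two_pow
    have hblockR : ((2:ℝ)^K * ((2:ℝ)^K - 1)) * (CqV (T % 4) (T % 4) : ℝ)
        ≤ 2 * ((pairsF (2^T) (2^T + 16 * 2^K)).card : ℝ) := by
      rw [← CqT_eq_CqV _ hTm4 _ hTm4]
      have hcast : (((2:ℕ)^K * (2^K - 1) * CqT (T % 4) (T % 4) : ℕ) : ℝ)
          = ((2:ℝ)^K * ((2:ℝ)^K - 1)) * (CqT (T % 4) (T % 4) : ℝ) := by
        push_cast [Nat.cast_sub hK1]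
        ring
      calc ((2:ℝ)^K * ((2:ℝ)^K - 1)) * (CqT (T % 4) (T % 4) : ℝ)
          = (((2:ℕ)^K * (2^K - 1) * CqT (T % 4) (T % 4) : ℕ) : ℝ) := hcast.symm
        _ ≤ ((2 * (pairsF (2^T) (2^T + 16 * 2^K)).card : ℕ) : ℝ) := by exact_mod_cast hblock
        _ = 2 * ((pairsF (2^T) (2^T + 16 * 2^K)).card : ℝ) := by push_cast; ring
    -- cast split
    have hident : (pairsF (2^T) (2^(T+1))).card = (pairsF (2^T) (2^T + 16 * 2^K)).card := by
      rw [← h2T1]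
    have hident2 : (crossF 1 (2^T) (2^T) (2^(T+1))).card
        = (crossF 1 (2^T) (2^T) (2^T + 16 * 2^K)).card := by
      rw [← h2T1]
    have hspR : ((pairsF 1 (2^T)).card : ℝ) + ((pairsF (2^T) (2^T + 16 * 2^K)).card : ℝ)
        + ((crossF 1 (2^T) (2^T) (2^T + 16 * 2^K)).card : ℝ)
        ≤ ((pairsF 1 (2^(T+1))).card : ℝ) := by
      rw [← hident, ← hident2]
      exact_mod_cast hsp
    have hCu : (CqV (T % 4) (T % 4) : ℝ) * (2:ℝ)^T ≤ 101 * (2:ℝ)^T :=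
      mul_le_mul_of_nonneg_right hCle (le_of_lt hupos)
    have hgoal4 : acR ((T+1) % 4) * (4:ℝ)^(T+1)
        = acR (T % 4) * ((2:ℝ)^T * (2:ℝ)^T) + xcR (T % 4) (T % 4) / 16 * ((2:ℝ)^T * (2:ℝ)^T)
          + (CqV (T % 4) (T % 4) : ℝ) / 512 * ((2:ℝ)^T * (2:ℝ)^T) := by
      rw [hmod, show (4:ℝ)^(T+1) = 4 * 4^T by ring, h4T]
      linear_combination ((2:ℝ)^T * (2:ℝ)^T) * hrec
    rw [h4T] at ih
    rw [h2Ku] at hblockR hcross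
    rw [hgoal4, show (2:ℝ)^(T+1) = 2 * 2^T by ring]
    nlinarith [hblockR, hcross, hspR, ih, hCu, hupos]

/- ---------------- final bound ---------------- -/

lemma main_bound {n : ℕ} (hn : 200000 ≤ n) :
    (3683/17672 : ℝ) * (n:ℝ)^2 ≤ ((pairsF 1 (n+1)).card : ℝ) := by
  have hn0 : n ≠ 0 := by omega
  set T := Nat.log 2 n with hT
  have hT4 : 4 ≤ T := by
    rw [hT]
    exact (Nat.le_log_iff_pow_le (by norm_num) hn0).mpr (by norm_num; omega)
  have hTm4 : T % 4 < 4 := Nat.mod_lt _ (by norm_num)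
  have hsn : 2^T ≤ n := Nat.pow_log_le_self 2 hn0
  have hn2 : n < 2^(T+1) := Nat.lt_pow_succ_log_self (by norm_num) n
  set m' := (n + 1 - 2^T) / 16 with hm'
  have hM1 : 16 * m' ≤ n + 1 - 2^T := by omega
  have hM2 : n + 1 - 2^T < 16 * m' + 16 := by omega
  have h16T : 2^T = 16 * 2^(T-4) := two_pow_split hT4
  have hLtop : ∀ i, 2^T ≤ i → i < 2^T + 16 * m' → Lab i = wf (T % 4) (i % 16) := by
    intro i h1 h2
    have hi2 : i < 2^(T+1) := by
      have : 2^T + 16 * m' ≤ n + 1 := by omega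
      have hle : n + 1 ≤ 2^(T+1) := by omega
      omega
    exact Lab_scale h1 hi2
  have hblock : m' * (m' - 1) * CqT (T % 4) (T % 4)
      ≤ 2 * (pairsF (2^T) (2^T + 16 * m')).card :=
    pairs_block ⟨2^(T-4), h16T⟩ hLtop
  have hcross := cross_scale_block T hT4 (T % 4) (2^T) m' hTm4 ⟨2^(T-4), h16T⟩ (le_refl _) hLtop
  push_cast at hcross
  have hsp := pairs_split (lo := 1) (mid := 2^T) (hi := n + 1)
    Nat.one_le_two_pow (by omega)
  have hmono1 : (pairsF (2^T) (2^T + 16 * m')).card ≤ (pairsF (2^T) (n+1)).card :=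
    Finset.card_le_card (pairsF_subset (le_refl _) (by omega))
  have hmono2 : (crossF 1 (2^T) (2^T) (2^T + 16 * m')).card
      ≤ (crossF 1 (2^T) (2^T) (n+1)).card :=
    Finset.card_le_card (crossF_subset (by omega))
  have hnat : (pairsF 1 (2^T)).card + (pairsF (2^T) (2^T + 16 * m')).card
      + (crossF 1 (2^T) (2^T) (2^T + 16 * m')).card ≤ (pairsF 1 (n+1)).card := by omega
  -- to reals
  have hscale := pairs_scale T hT4
  have hupos : (0:ℝ) < (2:ℝ)^T := by positivity
  have hu2 : ((2:ℕ)^T : ℝ) = (2:ℝ)^T := by push_cast; ring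
  have h4T : (4:ℝ)^T = (2:ℝ)^T * (2:ℝ)^T := by
    rw [show (4:ℝ) = 2 * 2 by norm_num, mul_pow]
  rw [h4T] at hscale
  -- cast hblock : real version
  have hy0 : (0:ℝ) ≤ (m' : ℝ) := by positivity
  have hblockR : (m' : ℝ) * ((m' : ℝ) - 1) * (CqV (T % 4) (T % 4) : ℝ)
      ≤ 2 * ((pairsF (2^T) (2^T + 16 * m')).card : ℝ) := by
    rw [← CqT_eq_CqV _ hTm4 _ hTm4]
    rcases Nat.eq_zero_or_pos m' with hz | hpos
    · rw [hz]
      have hpos2 : (0:ℝ) ≤ 2 * ((pairsF (2^T) (2^T + 16 * m')).card : ℝ) := by positivity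
      simpa using hpos2
    · have hcast : ((m' * (m' - 1) * CqT (T % 4) (T % 4) : ℕ) : ℝ)
          = (m' : ℝ) * ((m' : ℝ) - 1) * (CqT (T % 4) (T % 4) : ℝ) := by
        push_cast [Nat.cast_sub hpos]
        ring
      calc (m' : ℝ) * ((m' : ℝ) - 1) * (CqT (T % 4) (T % 4) : ℝ)
          = ((m' * (m' - 1) * CqT (T % 4) (T % 4) : ℕ) : ℝ) := hcast.symm
        _ ≤ ((2 * (pairsF (2^T) (2^T + 16 * m')).card : ℕ) : ℝ) := by exact_mod_cast hblock
        _ = 2 * ((pairsF (2^T) (2^T + 16 * m')).card : ℝ) := by push_cast; ring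
  have hnatR : ((pairsF 1 (2^T)).card : ℝ) + ((pairsF (2^T) (2^T + 16 * m')).card : ℝ)
      + ((crossF 1 (2^T) (2^T) (2^T + 16 * m')).card : ℝ)
      ≤ ((pairsF 1 (n+1)).card : ℝ) := by exact_mod_cast hnat
  -- quadratic inequality
  set u : ℝ := (2:ℝ)^T with hudef
  set y : ℝ := (m' : ℝ) with hydef
  have hxle : 16 * y ≤ u := by
    have h1 : (16 * m' : ℕ) ≤ 2^T := by
      have : n + 1 ≤ 2 * 2^T := by
        have := hn2
        rw [pow_succ] at this
        omega
      omega
    have := (Nat.cast_le (α := ℝ)).mpr h1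
    push_cast at this
    rw [hudef, hydef]
    push_cast
    linarith
  have hquad := quadIneq hTm4 (x := 16 * y / u)
    (by positivity) (by rw [div_le_one hupos]; exact hxle)
  -- multiply by u^2
  have hqu : (1043/5000) * (u + 16*y)^2
      ≤ acR (T % 4) * u^2 + xcR (T % 4) (T % 4) * y * u
        + (CqV (T % 4) (T % 4) : ℝ) * y^2 / 2 := by
    have h1 : (1043/5000 : ℝ) * (1 + 16*y/u)^2 * u^2
        ≤ (acR (T % 4) + xcR (T % 4) (T % 4) / 16 * (16*y/u)
          + (CqV (T % 4) (T % 4) : ℝ) / 512 * (16*y/u)^2) * u^2 :=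
      mul_le_mul_of_nonneg_right hquad (by positivity)
    have e1 : (1043/5000 : ℝ) * (1 + 16*y/u)^2 * u^2 = (1043/5000) * (u + 16*y)^2 := by
      field_simp
    have e2 : (acR (T % 4) + xcR (T % 4) (T % 4) / 16 * (16*y/u)
          + (CqV (T % 4) (T % 4) : ℝ) / 512 * (16*y/u)^2) * u^2
        = acR (T % 4) * u^2 + xcR (T % 4) (T % 4) * y * u
          + (CqV (T % 4) (T % 4) : ℝ) * y^2 / 2 := by
      field_simp
      ring
    rw [e1, e2] at h1
    exact h1
  -- error terms
  have hCle : (CqV (T % 4) (T % 4) : ℝ) ≤ 101 := CqV_le_101 hTm4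
  have hCy : (CqV (T % 4) (T % 4) : ℝ) * y ≤ 101 * y := mul_le_mul_of_nonneg_right hCle hy0
  -- combine: pairs card ≥ c'(u+16y)^2 - 16u - (C/2+128) y
  have hcombined : (1043/5000) * (u + 16*y)^2 - 16*u - 179 * y
      ≤ ((pairsF 1 (n+1)).card : ℝ) := by
    nlinarith [hscale, hblockR, hcross, hnatR, hqu, hCy, hy0, hupos]
  -- final comparison with n
  have hun : u ≤ (n:ℝ) := by
    rw [hudef]
    exact_mod_cast hsn
  have hyu : 16 * y ≤ u := hxle
  have hv : (n:ℝ) - 15 ≤ u + 16*y := by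
    have h1 : n + 1 ≤ 2^T + 16 * m' + 16 := by omega
    have h2 := (Nat.cast_le (α := ℝ)).mpr h1
    push_cast at h2
    rw [hudef, hydef]
    linarith
  have hn200 : (200000:ℝ) ≤ (n:ℝ) := by exact_mod_cast hn
  have hv0 : (0:ℝ) ≤ (n:ℝ) - 15 := by linarith
  have hsq : ((n:ℝ) - 15)^2 ≤ (u + 16*y)^2 := by
    have := pow_le_pow_left₀ hv0 hv 2
    simpa using this
  have hyn : y ≤ (n:ℝ) / 16 := by linarith
  nlinarith [hcombined, hsq, hun, hyn, hn200, hy0,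
    mul_le_mul_of_nonneg_right hn200 (Nat.cast_nonneg n)]

/- ---------------- edgeCount ---------------- -/

lemma edgeCount_Gr (n : ℕ) : edgeCount Gr n = (pairsF 1 (n+1)).card := by
  unfold edgeCount
  have hset : {p : ℕ × ℕ | 1 ≤ p.1 ∧ p.1 < p.2 ∧ p.2 ≤ n ∧ Gr.Adj p.1 p.2}
      = ↑(pairsF 1 (n+1)) := by
    ext p
    simp only [Set.mem_setOf_eq, Finset.mem_coe, mem_pairsF]
    constructor
    · rintro ⟨h1, h2, h3, hadj⟩
      have := (Gr_adj h2).mp hadj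
      exact ⟨h1, by omega, by omega, by omega, h2, this⟩
    · rintro ⟨h1, h2, h3, h4, h5, h6⟩
      exact ⟨h1, h5, by omega, (Gr_adj h5).mpr h6⟩
  rw [hset, Set.ncard_coe_finset]

lemma edgeCount_le_sq (n : ℕ) : edgeCount Gr n ≤ n^2 := by
  rw [edgeCount_Gr]
  calc (pairsF 1 (n+1)).card ≤ (Finset.Ico 1 (n+1) ×ˢ Finset.Ico 1 (n+1)).card :=
        Finset.card_le_card (Finset.filter_subset _ _)
    _ = n * n := by rw [Finset.card_product, Nat.card_Ico]; simp
    _ = n^2 := by ring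

theorem exists_I6_free_graph_with_large_liminf :
    ∃ G : SimpleGraph ℕ, ¬ HasIncPath G 6 ∧
      (3683 / 17672 : ℝ) ≤
        liminf (fun n : ℕ => (edgeCount G n : ℝ) / n ^ 2) atTop := by
  refine ⟨Gr, no_inc_path, ?_⟩
  have hbdd : ∀ n : ℕ, (edgeCount Gr n : ℝ) / n^2 ≤ 1 := by
    intro n
    rcases Nat.eq_zero_or_pos n with h0 | hpos
    · simp [h0]
    · have hp : (0:ℝ) < (n:ℝ)^2 := by positivity
      rw [div_le_one hp]
      have := edgeCount_le_sq n
      exact_mod_cast this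
  have hcob : IsCoboundedUnder (· ≥ ·) atTop (fun n : ℕ => (edgeCount Gr n : ℝ) / n^2) := by
    apply Filter.IsBoundedUnder.isCoboundedUnder_ge
    exact ⟨1, Filter.eventually_map.mpr (Filter.Eventually.of_forall hbdd)⟩
  apply Filter.le_liminf_of_le hcob
  rw [Filter.eventually_atTop]
  refine ⟨200000, fun n hn => ?_⟩
  have hp : (0:ℝ) < (n:ℝ)^2 := by positivity
  rw [le_div_iff₀ hp]
  rw [edgeCount_Gr]
  have := main_bound hn
  linarith
end

section
/- There exists a simple graph G on the positive integers that is I_7-free and satisfies liminf_{n→∞} e(G_n)/n² ≥ 365/1701, i.e., ≥ (1/4)(1 − 1/7) + 1/3402. -/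
open Filter

def tab : List ℕ := [3,3,3,4,4,0,4,4,5,0,5,0,5,6,0,1,6,0,5,1,5,1,6,1,6,1,2,2,3,6,1,5,1,6,1,2,6,2,2,2,6,2,2,2,6,2,2,3]

def lab (t : ℕ) : ℕ :=
  if 16 ≤ t ∧ t < 64 then tab.getD (t-16) 6
  else if 4 ≤ t then tab.getD (4*t-16) 6
  else if 1 ≤ t then tab.getD (16*t-16) 6
  else 6

def redAux : ℕ → ℕ → ℕ
  | 0, i => i
  | fuel+1, i => if i < 64 then i else redAux fuel (i / 4)

def red (i : ℕ) : ℕ := redAux i i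

def c (i : ℕ) : ℕ := lab (red i)

lemma redAux_congr : ∀ f1 f2 i, i ≤ f1 → i ≤ f2 → redAux f1 i = redAux f2 i := by
  intro f1
  induction f1 with
  | zero =>
    intro f2 i h1 h2
    interval_cases i
    cases f2 with
    | zero => rfl
    | succ f => simp [redAux]
  | succ f ih =>
    intro f2 i h1 h2
    cases f2 with
    | zero => interval_cases i; simp [redAux]
    | succ f2' =>
      simp only [redAux]
      split
      · rfl
      · exact ih f2' (i/4) (by omega) (by omega)

lemma red_spec (i : ℕ) : red i = if i < 64 then i else red (i / 4) := by
  cases i with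
  | zero => simp [red, redAux]
  | succ j =>
    show redAux (j+1) (j+1) = _
    simp only [redAux]
    split
    · rfl
    · exact redAux_congr j ((j+1)/4) ((j+1)/4) (by omega) le_rfl

lemma tab_getD_le (s : ℕ) : tab.getD s 6 ≤ 6 := by
  rcases h : tab[s]? with _ | a
  · simp [List.getD_eq_getElem?_getD, h]
  · have hm : a ∈ tab := List.mem_of_getElem? h
    have hall : ∀ a ∈ tab, a ≤ 6 := by decide
    simp only [List.getD_eq_getElem?_getD, h, Option.getD_some]
    exact hall a hm

lemma lab_le (t : ℕ) : lab t ≤ 6 := by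
  unfold lab
  split
  · exact tab_getD_le _
  split
  · exact tab_getD_le _
  split
  · exact tab_getD_le _
  · exact le_refl 6

lemma c_le (i : ℕ) : c i ≤ 6 := lab_le _

-- key: red of decomposition
lemma red_decomp : ∀ m T t, 16 ≤ T → T < 64 → t < 4^m → red (T * 4^m + t) = T := by
  intro m
  induction m with
  | zero =>
    intro T t h1 h2 h3
    have : t = 0 := by omega
    subst this
    rw [red_spec]
    simp
    omega
  | succ m ih =>
    intro T t h1 h2 h3
    rw [red_spec]
    have h64 : ¬ (T * 4^(m+1) + t < 64) := by
      have : 4 ≤ 4^(m+1) := by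
        calc 4 = 4^1 := rfl
        _ ≤ 4^(m+1) := Nat.pow_le_pow_right (by norm_num) (by omega)
      nlinarith
    rw [if_neg h64]
    have hdiv : (T * 4^(m+1) + t) / 4 = T * 4^m + t / 4 := by
      rw [pow_succ]
      rw [show T * (4^m * 4) + t = 4 * (T * 4^m) + t by ring]
      omega
    rw [hdiv]
    exact ih T (t/4) h1 h2 (by
      have : 4^(m+1) = 4 * 4^m := by ring
      omega)

lemma c_decomp (m T t : ℕ) (h1 : 16 ≤ T) (h2 : T < 64) (h3 : t < 4^m) :
    c (T * 4^m + t) = lab T := by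
  unfold c; rw [red_decomp m T t h1 h2 h3]

def Ncnt (a n : ℕ) : ℕ := ((Finset.range n).filter (fun i => c i = a)).card
def wfun (j : ℕ) : ℕ := ((Finset.range j).filter (fun i => c i < c j)).card
def ef (n : ℕ) : ℕ := ∑ j ∈ Finset.range n, wfun j

lemma Ncnt_succ (a n : ℕ) : Ncnt a (n+1) = Ncnt a n + (if c n = a then 1 else 0) := by
  unfold Ncnt
  rw [Finset.range_add_one, Finset.filter_insert]
  split
  · rw [Finset.card_insert_of_notMem (by simp)]
  · simp

lemma ef_succ (n : ℕ) : ef (n+1) = ef n + wfun n := Finset.sum_range_succ _ _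

lemma wfun_eq (j : ℕ) : wfun j = ∑ a ∈ Finset.range (c j), Ncnt a j := by
  unfold wfun Ncnt
  rw [← Finset.card_biUnion]
  · congr 1
    ext i
    simp only [Finset.mem_biUnion, Finset.mem_filter, Finset.mem_range]
    constructor
    · rintro ⟨hi, hlt⟩; exact ⟨c i, hlt, hi, rfl⟩
    · rintro ⟨a, ha, hi, rfl⟩; exact ⟨hi, ha⟩
  · intro a _ b _ hab
    apply Finset.disjoint_left.mpr
    intro i hi hj
    simp only [Finset.mem_filter] at hi hj
    exact hab (hi.2 ▸ hj.2 ▸ rfl)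

-- constants
def Econ (a : ℕ) : ℕ := Ncnt a 16
def gcon (a : ℕ) : ℕ := ((Finset.range 48).filter (fun s => lab (16+s) = a)).card
def kcon (a T : ℕ) : ℕ := ((Finset.range (T-16)).filter (fun s => lab (16+s) = a)).card
def Acon (T : ℕ) : ℕ := ∑ a ∈ Finset.range (lab T), Econ a
def Bcon (T : ℕ) : ℕ := ∑ a ∈ Finset.range (lab T), gcon a
def Kcon (T : ℕ) : ℕ := ∑ a ∈ Finset.range (lab T), kcon a T
def AA (T : ℕ) : ℕ := ∑ s ∈ Finset.range (T-16), Acon (16+s)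
def BB (T : ℕ) : ℕ := ∑ s ∈ Finset.range (T-16), Bcon (16+s)
def CC (T : ℕ) : ℕ := ∑ s ∈ Finset.range (T-16), Kcon (16+s)

noncomputable section
open scoped BigOperators

def w45 : ℤ := 45*58 - ((BB 64 : ℤ) + 3*CC 64) - 5*(3*(AA 64 : ℤ) - BB 64)
def F45 (x : ℤ) : ℤ := ((BB 64 : ℤ) + 3*CC 64)*x^2 + 5*(3*(AA 64 : ℤ) - BB 64)*x + w45
def Wlin (T : ℕ) (x : ℤ) : ℤ := 3*(Acon T : ℤ) + (Bcon T : ℤ)*(x-1) + 3*(Kcon T : ℤ)*x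
def Zlin (T : ℕ) (x : ℤ) : ℤ := 3*(AA T : ℤ) + (BB T : ℤ)*(x-1) + 3*(CC T : ℤ)*x

lemma kcon_succ (a T : ℕ) (h : 16 ≤ T) :
    kcon a (T+1) = kcon a T + (if lab T = a then 1 else 0) := by
  unfold kcon
  have : T + 1 - 16 = (T - 16) + 1 := by omega
  rw [this, Finset.range_add_one, Finset.filter_insert]
  have h16 : 16 + (T - 16) = T := by omega
  split <;> rename_i hc
  · rw [h16] at hc
    rw [Finset.card_insert_of_notMem (by simp), if_pos hc]
  · rw [h16] at hc
    rw [if_neg hc]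
    simp

lemma AA_succ (T : ℕ) (h : 16 ≤ T) : AA (T+1) = AA T + Acon T := by
  unfold AA
  have : T + 1 - 16 = (T - 16) + 1 := by omega
  rw [this, Finset.sum_range_succ]
  congr 2
  omega

lemma BB_succ (T : ℕ) (h : 16 ≤ T) : BB (T+1) = BB T + Bcon T := by
  unfold BB
  have : T + 1 - 16 = (T - 16) + 1 := by omega
  rw [this, Finset.sum_range_succ]
  congr 2
  omega

lemma CC_succ (T : ℕ) (h : 16 ≤ T) : CC (T+1) = CC T + Kcon T := by
  unfold CC
  have : T + 1 - 16 = (T - 16) + 1 := by omega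
  rw [this, Finset.sum_range_succ]
  congr 2
  omega

lemma kcon_64 (a : ℕ) : kcon a 64 = gcon a := rfl

def NForm (m T t : ℕ) : Prop :=
  ∀ a : ℕ, (3:ℤ) * Ncnt a (T * 4^m + t) =
    3*(Econ a : ℤ) + (gcon a : ℤ)*((4:ℤ)^m - 1) + 3*(kcon a T : ℤ)*(4:ℤ)^m
      + 3*(if lab T = a then (t:ℤ) else 0)

def FForm (m T t : ℕ) : Prop :=
  (45:ℤ) * ef (T * 4^m + t) =
    F45 ((4:ℤ)^m) + 15*(4:ℤ)^m * Zlin T ((4:ℤ)^m) + 15*(t:ℤ) * Wlin T ((4:ℤ)^m)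

lemma wfun_form (m T t : ℕ) (h1 : 16 ≤ T) (h2 : T < 64) (h3 : t < 4^m)
    (hN : NForm m T t) :
    (3:ℤ) * wfun (T * 4^m + t) = Wlin T ((4:ℤ)^m) := by
  have hc : c (T * 4^m + t) = lab T := c_decomp m T t h1 h2 h3
  rw [wfun_eq, hc]
  push_cast
  rw [Finset.mul_sum]
  have : ∀ a ∈ Finset.range (lab T),
      (3:ℤ) * (Ncnt a (T * 4^m + t) : ℤ) =
      3*(Econ a : ℤ) + (gcon a : ℤ)*((4:ℤ)^m - 1) + 3*(kcon a T : ℤ)*(4:ℤ)^m := by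
    intro a ha
    rw [hN a]
    rw [if_neg (by simp at ha; omega)]
    ring
  rw [Finset.sum_congr rfl this]
  unfold Wlin Acon Bcon Kcon
  push_cast
  simp only [Finset.sum_add_distrib, ← Finset.sum_mul, ← Finset.mul_sum]

lemma pow4_pos (m : ℕ) : 0 < 4^m := Nat.pow_pos (by norm_num)

theorem main_inv : ∀ n m T t, 16 ≤ T → T < 64 → t < 4^m → T*4^m + t = n →
    NForm m T t ∧ FForm m T t := by
  intro n
  induction n using Nat.strong_induction_on with
  | _ n ih =>
    intro m T t h1 h2 h3 hn
    rcases Nat.eq_zero_or_pos t with ht | ht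
    · subst ht
      rcases Nat.lt_or_ge 16 T with hT | hT
      · -- case (b): T ≥ 17, t = 0
        obtain ⟨T', rfl⟩ : ∃ T', T = T' + 1 := ⟨T - 1, by omega⟩
        have h1' : 16 ≤ T' := by omega
        have h2' : T' < 64 := by omega
        have h3' : 4^m - 1 < 4^m := by have := pow4_pos m; omega
        have hexp : (T'+1) * 4^m = T' * 4^m + 4^m := by ring
        have hprev : T' * 4^m + (4^m - 1) = n - 1 := by
          have := pow4_pos m; omega
        have hlt : n - 1 < n := by
          have := pow4_pos m; omega
        obtain ⟨hN, hF⟩ := ih (n-1) hlt m T' (4^m - 1) h1' h2' h3' hprev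
        have hneq : (T'+1) * 4^m + 0 = (T' * 4^m + (4^m - 1)) + 1 := by
          have := pow4_pos m; ring_nf; omega
        have hcprev : c (T' * 4^m + (4^m - 1)) = lab T' := c_decomp m T' _ h1' h2' h3'
        have hcast : ((4^m - 1 : ℕ) : ℤ) = (4:ℤ)^m - 1 := by
          have := pow4_pos m; push_cast [this]; omega
        constructor
        · intro a
          have hs := Ncnt_succ a (T' * 4^m + (4^m - 1))
          rw [hneq, hs, hcprev]
          have hk := kcon_succ a T' h1'
          have := hN a
          by_cases hla : lab T' = a
          · rw [if_pos hla] at this ⊢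
            by_cases hla2 : lab (T'+1) = a
            · rw [if_pos hla2]
              push_cast [hk, if_pos hla, hcast] at this ⊢
              linear_combination this
            · rw [if_neg hla2]
              push_cast [hk, if_pos hla, hcast] at this ⊢
              linear_combination this
          · rw [if_neg hla] at this ⊢
            by_cases hla2 : lab (T'+1) = a
            · rw [if_pos hla2]
              push_cast [hk, if_neg hla, hcast] at this ⊢
              linear_combination this
            · rw [if_neg hla2]
              push_cast [hk, if_neg hla, hcast] at this ⊢
              linear_combination this
        · unfold FForm
          rw [hneq, ef_succ]
          have hw : (3:ℤ) * wfun (T' * 4^m + (4^m - 1)) = Wlin T' ((4:ℤ)^m) :=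
            wfun_form m T' _ h1' h2' h3' hN
          unfold FForm at hF
          rw [hcast] at hF
          have hZ : Zlin (T'+1) ((4:ℤ)^m) = Zlin T' ((4:ℤ)^m) + Wlin T' ((4:ℤ)^m) := by
            unfold Zlin Wlin
            rw [AA_succ T' h1', BB_succ T' h1', CC_succ T' h1']
            push_cast
            ring
          rw [hZ]
          push_cast
          linear_combination hF + 15 * hw
      · -- T = 16, t = 0
        have hT16 : T = 16 := by omega
        subst hT16
        cases m with
        | zero =>
          -- base case n = 16
          constructor
          · intro a
            show (3:ℤ) * Ncnt a (16 * 4^0 + 0) = _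
            norm_num [kcon, Econ]
          · unfold FForm
            have : (16 * 4^0 + 0) = 16 := by norm_num
            rw [this, show ef 16 = 58 from by decide]
            unfold F45 w45 Zlin AA BB CC
            norm_num
        | succ m' =>
          -- case (d)
          have h1' : (16:ℕ) ≤ 63 := by norm_num
          have h2' : (63:ℕ) < 64 := by norm_num
          have h3' : 4^m' - 1 < 4^m' := by have := pow4_pos m'; omega
          have hprev : 63 * 4^m' + (4^m' - 1) = n - 1 := by
            have := pow4_pos m'
            have : 16 * 4^(m'+1) = 64 * 4^m' := by ring
            omega
          have hlt : n - 1 < n := by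
            have := pow4_pos m'
            have h16 : 16 * 4^(m'+1) + 0 = 64 * 4^m' := by ring
            omega
          obtain ⟨hN, hF⟩ := ih (n-1) hlt m' 63 (4^m' - 1) h1' h2' h3' hprev
          have hneq : 16 * 4^(m'+1) + 0 = (63 * 4^m' + (4^m' - 1)) + 1 := by
            have := pow4_pos m'; ring_nf; omega
          have hcprev : c (63 * 4^m' + (4^m' - 1)) = lab 63 := c_decomp m' 63 _ h1' h2' h3'
          have hcast : ((4^m' - 1 : ℕ) : ℤ) = (4:ℤ)^m' - 1 := by
            have := pow4_pos m'; push_cast [this]; omega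
          have hpow : ((4:ℤ))^(m'+1) = 4*(4:ℤ)^m' := by ring
          constructor
          · intro a
            have hs := Ncnt_succ a (63 * 4^m' + (4^m' - 1))
            rw [hneq, hs, hcprev]
            have hk : kcon a 64 = kcon a 63 + (if lab 63 = a then 1 else 0) :=
              kcon_succ a 63 h1'
            rw [kcon_64] at hk
            have h16 : kcon a 16 = 0 := rfl
            have := hN a
            by_cases hla : lab 63 = a
            · rw [if_pos hla] at this ⊢
              push_cast [hk, if_pos hla, hcast, h16, hpow] at this ⊢
              simp only [ite_self]
              linear_combination this
            · rw [if_neg hla] at this ⊢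
              push_cast [hk, if_neg hla, hcast, h16, hpow] at this ⊢
              simp only [ite_self]
              linear_combination this
          · unfold FForm
            rw [hneq, ef_succ]
            have hw : (3:ℤ) * wfun (63 * 4^m' + (4^m' - 1)) = Wlin 63 ((4:ℤ)^m') :=
              wfun_form m' 63 _ h1' h2' h3' hN
            unfold FForm at hF
            have hAA : AA 64 = AA 63 + Acon 63 := AA_succ 63 h1'
            have hBB : BB 64 = BB 63 + Bcon 63 := BB_succ 63 h1'
            have hCC : CC 64 = CC 63 + Kcon 63 := CC_succ 63 h1'
            have hZ16 : Zlin 16 ((4:ℤ)^(m'+1)) = 0 := by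
              unfold Zlin AA BB CC
              norm_num
            rw [hcast] at hF
            have hF45 : F45 ((4:ℤ)^(m'+1)) = F45 ((4:ℤ)^m')
                + 15*(4:ℤ)^m' * (Zlin 63 ((4:ℤ)^m') + Wlin 63 ((4:ℤ)^m')) := by
              unfold F45 w45 Zlin Wlin
              rw [hAA, hBB, hCC]
              push_cast
              ring
            rw [hZ16, hF45]
            push_cast
            linear_combination hF + 15 * hw
    · -- case (a): t > 0
      obtain ⟨t', rfl⟩ : ∃ t', t = t' + 1 := ⟨t - 1, by omega⟩
      have h3' : t' < 4^m := by omega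
      have hprev : T * 4^m + t' = n - 1 := by omega
      have hlt : n - 1 < n := by nlinarith [pow4_pos m]
      obtain ⟨hN, hF⟩ := ih (n-1) hlt m T t' h1 h2 h3' hprev
      have hneq : T * 4^m + (t'+1) = (T * 4^m + t') + 1 := by ring
      have hcprev : c (T * 4^m + t') = lab T := c_decomp m T t' h1 h2 h3'
      constructor
      · intro a
        have hs := Ncnt_succ a (T * 4^m + t')
        rw [hneq, hs, hcprev]
        have := hN a
        by_cases hla : lab T = a
        · rw [if_pos hla] at this ⊢
          push_cast [if_pos hla] at this ⊢
          linear_combination this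
        · rw [if_neg hla] at this ⊢
          push_cast [if_neg hla] at this ⊢
          linear_combination this
      · unfold FForm
        rw [hneq, ef_succ]
        have hw : (3:ℤ) * wfun (T * 4^m + t') = Wlin T ((4:ℤ)^m) :=
          wfun_form m T t' h1 h2 h3' hN
        unfold FForm at hF
        push_cast at hF ⊢
        linear_combination hF + 15 * hw

def qa (T : ℕ) : ℤ := 1701*(((BB 64:ℤ) + 3*(CC 64:ℤ)) + 15*((BB T:ℤ) + 3*(CC T:ℤ))) - 16425*(T:ℤ)^2
def qb (T : ℕ) : ℤ := 1701*(5*(3*(AA 64:ℤ) - (BB 64:ℤ)) + 15*(3*(AA T:ℤ) - (BB T:ℤ))) + 382725*(T:ℤ)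

set_option maxHeartbeats 2000000 in
lemma cond_check : ∀ T ∈ Finset.Icc 16 64, 0 ≤ qa T ∧ 0 ≤ qb T ∧ 0 ≤ qa T + qb T + 1701*w45 := by decide

lemma exists_decomp : ∀ n, 16 ≤ n → ∃ m T t, 16 ≤ T ∧ T < 64 ∧ t < 4^m ∧ T*4^m + t = n := by
  intro n
  induction n using Nat.strong_induction_on with
  | _ n ih =>
    intro hn
    rcases Nat.lt_or_ge n 64 with h | h
    · exact ⟨0, n, 0, hn, h, by norm_num, by ring⟩
    · have h4 : 16 ≤ n / 4 := by omega
      have hlt : n / 4 < n := by omega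
      obtain ⟨m, T, t, h1, h2, h3, heq⟩ := ih (n/4) hlt h4
      refine ⟨m+1, T, 4*t + n % 4, h1, h2, by
        have : 4^(m+1) = 4*4^m := by ring
        omega, by
        have : T * 4^(m+1) = 4*(T * 4^m) := by ring
        omega⟩

lemma endpoint_nonneg (T : ℕ) (x : ℤ) (hT1 : 16 ≤ T) (hT2 : T ≤ 64) (hx : 1 ≤ x) :
    0 ≤ qa T * x^2 + qb T * x + 1701 * w45 := by
  obtain ⟨hqa, hqb, hsum⟩ := cond_check T (Finset.mem_Icc.mpr ⟨hT1, hT2⟩)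
  nlinarith [mul_le_mul_of_nonneg_left hx (le_trans hqa (le_of_eq rfl))]

lemma P1_eq (T : ℕ) (x : ℤ) :
    1701*(F45 x + 15*x*Zlin T x) - 16425*(T:ℤ)^2*x^2 + 382725*(T:ℤ)*x
      = qa T * x^2 + qb T * x + 1701*w45 := by
  unfold F45 Zlin qa qb
  ring

lemma P2_eq (T : ℕ) (x : ℤ) (h1 : 16 ≤ T) :
    1701*(F45 x + 15*x*Zlin T x + 15*x*Wlin T x) - 16425*((T:ℤ)+1)^2*x^2 + 382725*((T:ℤ)+1)*x
      = qa (T+1) * x^2 + qb (T+1) * x + 1701*w45 := by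
  unfold F45 Zlin Wlin qa qb
  rw [AA_succ T h1, BB_succ T h1, CC_succ T h1]
  push_cast
  ring

theorem ef_bound (n : ℕ) (hn : 16 ≤ n) :
    16425*(n:ℤ)^2 ≤ 76545*(ef n : ℤ) + 382725*(n:ℤ) := by
  obtain ⟨m, T, t, h1, h2, h3, heq⟩ := exists_decomp n hn
  obtain ⟨_, hF⟩ := main_inv n m T t h1 h2 h3 heq
  unfold FForm at hF
  rw [heq] at hF
  set x : ℤ := (4:ℤ)^m with hxdef
  have hx1 : (1:ℤ) ≤ x := one_le_pow₀ (by norm_num)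
  have htx : (t:ℤ) < x := by
    rw [hxdef]
    exact_mod_cast h3
  have ht0 : (0:ℤ) ≤ t := Int.ofNat_nonneg t
  have hcastn : (n:ℤ) = (T:ℤ)*x + (t:ℤ) := by
    rw [← heq]
    push_cast
    ring
  have hP1 : 0 ≤ 1701*(F45 x + 15*x*Zlin T x) - 16425*(T:ℤ)^2*x^2 + 382725*(T:ℤ)*x := by
    rw [P1_eq]
    exact endpoint_nonneg T x h1 (by omega) hx1
  have hP2 : 0 ≤ 1701*(F45 x + 15*x*Zlin T x + 15*x*Wlin T x)
      - 16425*((T:ℤ)+1)^2*x^2 + 382725*((T:ℤ)+1)*x := by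
    rw [P2_eq T x h1]
    have := endpoint_nonneg (T+1) x (by omega) (by omega) hx1
    push_cast at this ⊢
    exact this
  -- x * D = (x - t) * P1 + t * P2 + 16425 * x * t * (x - t)
  have hD : 0 ≤ x * (76545*(ef n : ℤ) + 382725*(n:ℤ) - 16425*(n:ℤ)^2) := by
    have hkey : x * (76545*(ef n : ℤ) + 382725*(n:ℤ) - 16425*(n:ℤ)^2)
        = (x - (t:ℤ)) * (1701*(F45 x + 15*x*Zlin T x) - 16425*(T:ℤ)^2*x^2 + 382725*(T:ℤ)*x)
          + (t:ℤ) * (1701*(F45 x + 15*x*Zlin T x + 15*x*Wlin T x)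
              - 16425*((T:ℤ)+1)^2*x^2 + 382725*((T:ℤ)+1)*x)
          + 16425 * x * (t:ℤ) * (x - (t:ℤ)) := by
      rw [hcastn]
      have h45 : (76545:ℤ)*(ef n : ℤ) = 1701 * ((45:ℤ)*(ef n:ℤ)) := by ring
      rw [h45, hF]
      ring
    rw [hkey]
    have hxt : (0:ℤ) ≤ x - t := by omega
    have hxpos : (0:ℤ) ≤ x := by omega
    have h3' : (0:ℤ) ≤ 16425 * x * (t:ℤ) * (x - (t:ℤ)) := by positivity
    have h1' : (0:ℤ) ≤ (x - (t:ℤ)) * (1701*(F45 x + 15*x*Zlin T x)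
        - 16425*(T:ℤ)^2*x^2 + 382725*(T:ℤ)*x) := mul_nonneg hxt hP1
    have h2' : (0:ℤ) ≤ (t:ℤ) * (1701*(F45 x + 15*x*Zlin T x + 15*x*Wlin T x)
        - 16425*((T:ℤ)+1)^2*x^2 + 382725*((T:ℤ)+1)*x) := mul_nonneg ht0 hP2
    linarith
  rcases le_or_gt (16425*(n:ℤ)^2) (76545*(ef n : ℤ) + 382725*(n:ℤ)) with h | h
  · exact h
  · exfalso
    have hDneg : 76545*(ef n : ℤ) + 382725*(n:ℤ) - 16425*(n:ℤ)^2 < 0 := by linarith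
    have : x * (76545*(ef n : ℤ) + 382725*(n:ℤ) - 16425*(n:ℤ)^2) < 0 :=
      mul_neg_of_pos_of_neg (by omega) hDneg
    linarith

def G : SimpleGraph ℕ where
  Adj i j := (i < j ∧ c i < c j) ∨ (j < i ∧ c j < c i)
  symm := ⟨fun i j h => by tauto⟩
  loopless := ⟨fun i h => by rcases h with ⟨h,_⟩|⟨h,_⟩ <;> omega⟩

lemma G_adj (i j : ℕ) : G.Adj i j ↔ (i < j ∧ c i < c j) ∨ (j < i ∧ c j < c i) := Iff.rfl

lemma no_inc_path_s4 : ¬ HasIncPath G 7 := by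
  rintro ⟨f, _, hmono, hadj⟩
  have key : ∀ k : ℕ, ∀ hk : k < 7, c (f ⟨k, by omega⟩) < c (f ⟨k+1, by omega⟩) := by
    intro k hk
    have hadjk := hadj ⟨k, hk⟩
    have hcs : (⟨k, hk⟩ : Fin 7).castSucc = (⟨k, by omega⟩ : Fin 8) := rfl
    have hsc : (⟨k, hk⟩ : Fin 7).succ = (⟨k+1, by omega⟩ : Fin 8) := rfl
    rw [hcs, hsc] at hadjk
    have hlt : f ⟨k, by omega⟩ < f ⟨k+1, by omega⟩ :=
      hmono (show (⟨k, by omega⟩ : Fin 8) < ⟨k+1, by omega⟩ by simp [Fin.lt_def])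
    rcases hadjk with ⟨_, hc⟩ | ⟨hgt, _⟩
    · exact hc
    · omega
  have chain : ∀ k : ℕ, ∀ hk : k ≤ 7, k ≤ c (f ⟨k, by omega⟩) := by
    intro k
    induction k with
    | zero => intro; exact Nat.zero_le _
    | succ k ih =>
      intro hk
      have h1 := ih (by omega)
      have h2 := key k (by omega)
      omega
  have h7 := chain 7 le_rfl
  have := c_le (f ⟨7, by omega⟩)
  omega

lemma edgeCount_eq (n : ℕ) : edgeCount G n = ef (n+1) := by
  have hset : {p : ℕ × ℕ | 1 ≤ p.1 ∧ p.1 < p.2 ∧ p.2 ≤ n ∧ G.Adj p.1 p.2}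
      = ↑((Finset.range (n+1) ×ˢ Finset.range (n+1)).filter
          (fun p => p.1 < p.2 ∧ c p.1 < c p.2)) := by
    ext ⟨i, j⟩
    simp only [Set.mem_setOf_eq, Finset.coe_filter, Finset.mem_product, Finset.mem_range,
      Set.mem_setOf_eq]
    constructor
    · rintro ⟨h1, hlt, hle, hadj⟩
      rcases hadj with ⟨_, hc⟩ | ⟨hgt, _⟩
      · exact ⟨⟨by omega, by omega⟩, hlt, hc⟩
      · omega
    · rintro ⟨⟨hi, hj⟩, hlt, hc⟩
      have h1 : 1 ≤ i := by
        rcases Nat.eq_zero_or_pos i with rfl | h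
        · have hle6 := c_le j
          have hc0 : c 0 = 6 := by decide
          omega
        · exact h
      exact ⟨h1, hlt, by omega, Or.inl ⟨hlt, hc⟩⟩
  rw [edgeCount, hset, Set.ncard_coe_finset]
  have hbi : (Finset.range (n+1) ×ˢ Finset.range (n+1)).filter
        (fun p => p.1 < p.2 ∧ c p.1 < c p.2)
      = (Finset.range (n+1)).biUnion (fun j =>
          ((Finset.range j).filter (fun i => c i < c j)).image (fun i => (i, j))) := by
    ext ⟨i, j⟩
    simp only [Finset.mem_filter, Finset.mem_product, Finset.mem_range, Finset.mem_biUnion,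
      Finset.mem_image]
    constructor
    · rintro ⟨⟨hi, hj⟩, hlt, hc⟩
      exact ⟨j, hj, i, ⟨hlt, hc⟩, rfl⟩
    · rintro ⟨j', hj', i', ⟨hij', hcij'⟩, heq⟩
      obtain ⟨rfl, rfl⟩ : i' = i ∧ j' = j := ⟨congrArg Prod.fst heq, congrArg Prod.snd heq⟩
      exact ⟨⟨by omega, hj'⟩, hij', hcij'⟩
  rw [hbi, Finset.card_biUnion]
  · unfold ef wfun
    refine Finset.sum_congr rfl fun j _ => ?_
    rw [Finset.card_image_of_injective _ (fun a b h => by simpa using congrArg Prod.fst h)]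
  · intro a _ b _ hab
    rw [Function.onFun, Finset.disjoint_left]
    rintro ⟨i, j⟩ hpa hpb
    simp only [Finset.mem_image] at hpa hpb
    obtain ⟨_, _, h1⟩ := hpa
    obtain ⟨_, _, h2⟩ := hpb
    have : a = j := congrArg Prod.snd h1
    have : b = j := congrArg Prod.snd h2
    omega

theorem exists_I7_free_graph_with_large_liminf :
    ∃ G : SimpleGraph ℕ, ¬ HasIncPath G 7 ∧
      (365 / 1701 : ℝ) ≤
        liminf (fun n : ℕ => (edgeCount G n : ℝ) / n ^ 2) atTop := by
  refine ⟨G, no_inc_path_s4, ?_⟩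
  have hev : ∀ᶠ (n : ℕ) in atTop,
      (365/1701 : ℝ) - 10 / n ≤ (edgeCount G n : ℝ) / n ^ 2 := by
    filter_upwards [eventually_ge_atTop 16] with n hn
    have hb := ef_bound (n+1) (by omega)
    rw [show ef (n+1) = edgeCount G n from (edgeCount_eq n).symm] at hb
    have hR : (16425:ℝ)*((n:ℝ)+1)^2 ≤ 76545*(edgeCount G n : ℝ) + 382725*((n:ℝ)+1) := by
      exact_mod_cast hb
    have hnR : (16:ℝ) ≤ (n:ℝ) := by exact_mod_cast hn
    have hn2 : (0:ℝ) < (n:ℝ)^2 := by positivity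
    have key : (365/1701:ℝ)*(n:ℝ)^2 - 10*(n:ℝ) ≤ (edgeCount G n : ℝ) := by
      have hexp2 : ((n:ℝ)+1)^2 = (n:ℝ)^2 + 2*(n:ℝ) + 1 := by ring
      rw [hexp2] at hR
      linarith
    rw [le_div_iff₀ hn2]
    have hne : (n:ℝ) ≠ 0 := by positivity
    have hexp : (365/1701 - 10/(n:ℝ)) * (n:ℝ)^2 = 365/1701*(n:ℝ)^2 - 10*(n:ℝ) := by
      field_simp
    rw [hexp]
    exact key
  have hlim : Tendsto (fun n : ℕ => (365/1701 : ℝ) - 10 / n) atTop (nhds (365/1701)) := by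
    have h0 : Tendsto (fun n : ℕ => (10:ℝ) / n) atTop (nhds 0) :=
      tendsto_const_div_atTop_nhds_zero_nat 10
    simpa using (tendsto_const_nhds (x := (365/1701:ℝ)) (f := atTop)).sub h0
  have h1 : liminf (fun n : ℕ => (365/1701 : ℝ) - 10 / n) atTop = 365/1701 := hlim.liminf_eq
  rw [← h1]
  have hub : ∀ᶠ (n : ℕ) in atTop, (edgeCount G n : ℝ)/(n:ℝ)^2 ≤ 2 := by
    filter_upwards [eventually_ge_atTop 1] with n hn
    have hwle : ∀ j, wfun j ≤ j := fun j =>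
      le_trans (Finset.card_filter_le _ _) (by simp)
    have hef : ef (n+1) ≤ (n+1)*n := by
      unfold ef
      calc ∑ j ∈ Finset.range (n+1), wfun j
          ≤ ∑ _j ∈ Finset.range (n+1), n := by
            refine Finset.sum_le_sum fun j hj => ?_
            have := hwle j
            simp only [Finset.mem_range] at hj
            omega
        _ = (n+1)*n := by
            simp [Finset.sum_const, mul_comm]
    have hE : (edgeCount G n : ℝ) ≤ ((n:ℝ)+1)*(n:ℝ) := by
      rw [edgeCount_eq]
      exact_mod_cast hef
    have hn1 : (1:ℝ) ≤ (n:ℝ) := by exact_mod_cast hn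
    have hn2 : (0:ℝ) < (n:ℝ)^2 := by positivity
    rw [div_le_iff₀ hn2]
    nlinarith
  have hbd : IsBoundedUnder (· ≥ ·) atTop (fun n : ℕ => (365/1701 : ℝ) - 10 / n) := by
    refine isBoundedUnder_of ⟨-10, fun n => ?_⟩
    simp only [ge_iff_le]
    have : (10:ℝ)/(n:ℕ) ≤ 10 := by
      rcases Nat.eq_zero_or_pos n with rfl | h
      · norm_num
      · have h1 : (1:ℝ) ≤ (n:ℝ) := by exact_mod_cast h
        rw [div_le_iff₀ (by linarith)]
        nlinarith
    linarith
  exact liminf_le_liminf hev hbd (isCoboundedUnder_ge_of_eventually_le atTop hub)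
end
end

section
/- There exists a simple graph G on the positive integers that is I_11-free and satisfies liminf_{n→∞} e(G_n)/n² ≥ 18033/79202, i.e., ≥ (1/4)(1 − 1/11) + 179/435611. -/
set_option maxRecDepth 100000

open Filter

namespace IncPathConstruction

/-- breakpoints of the base scale -/
def mb (j : ℕ) : ℕ := [20,22,26,27,31,39,47,56,62,72,80,89,100].getD j 0

/-- label word -/
def wv (k : ℕ) : ℕ := [10,3,9,4,5,6,7,0,8,1,9,2].getD (k % 12) 0

/-- segment boundaries: segment `k` is `(b k, b (k+1)]` -/
def b (k : ℕ) : ℕ := mb (k % 12) * 5 ^ (k / 12)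

lemma wv_le (k : ℕ) : wv k ≤ 10 := by
  have h : k % 12 < 12 := Nat.mod_lt _ (by norm_num)
  unfold wv
  set r := k % 12 with hr
  interval_cases r <;> simp

lemma wv_add12 (k : ℕ) : wv (k + 12) = wv k := by
  unfold wv
  rw [Nat.add_mod_right]

lemma wv_addmul12 (k σ : ℕ) : wv (k + 12 * σ) = wv k := by
  induction σ with
  | zero => rfl
  | succ s ih => rw [show k + 12*(s+1) = (k + 12*s) + 12 by ring, wv_add12, ih]

lemma b_add12 (k : ℕ) : b (k + 12) = 5 * b k := by
  unfold b
  rw [Nat.add_mod_right, Nat.add_div_right _ (by norm_num), pow_succ]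
  ring

lemma b_shift (k σ : ℕ) : b (k + 12 * σ) = b k * 5 ^ σ := by
  induction σ with
  | zero => simp
  | succ s ih =>
      rw [show k + 12*(s+1) = (k + 12*s) + 12 by ring, b_add12, ih, pow_succ]
      ring

lemma b_lt_succ (k : ℕ) : b k < b (k + 1) := by
  have h12 : k % 12 < 12 := Nat.mod_lt _ (by norm_num)
  have hk : k = 12 * (k / 12) + k % 12 := (Nat.div_add_mod' k 12).symm ▸ by omega
  set q := k / 12 with hq
  set r := k % 12 with hr
  have hbk : b k = mb r * 5 ^ q := by unfold b; rw [← hr, ← hq]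
  rcases Nat.lt_or_ge r 11 with h | h
  · have h1 : (k+1) % 12 = r + 1 := by omega
    have h2 : (k+1) / 12 = q := by omega
    have hbk1 : b (k+1) = mb (r+1) * 5 ^ q := by unfold b; rw [h1, h2]
    rw [hbk, hbk1]
    have hmb : mb r < mb (r+1) := by interval_cases r <;> simp [mb]
    have hp : 0 < 5 ^ q := Nat.pow_pos (by norm_num)
    exact (Nat.mul_lt_mul_right hp).mpr hmb
  · have hr11 : r = 11 := by omega
    have h1 : (k+1) % 12 = 0 := by omega
    have h2 : (k+1) / 12 = q + 1 := by omega
    have hbk1 : b (k+1) = mb 0 * 5 ^ (q+1) := by unfold b; rw [h1, h2]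
    rw [hbk, hbk1, hr11, pow_succ]
    simp only [mb]
    norm_num
    nlinarith [(Nat.pow_pos (show 0 < 5 by norm_num) : 0 < 5 ^ q)]

lemma b_mono : StrictMono b := strictMono_nat_of_lt_succ b_lt_succ

lemma b_ge20 (k : ℕ) : 20 ≤ b k := by
  have := b_mono.monotone (Nat.zero_le k)
  simpa [b, mb] using this

lemma b_ge_id (k : ℕ) : k ≤ b k := b_mono.le_apply

lemma b_eq_mb : ∀ k, k ≤ 12 → b k = mb k := by decide

/-- the vertex labelling -/
def lab (x : ℕ) : ℕ :=
  if h : x ≤ 100 then wv (Nat.findGreatest (fun k => mb k < x) 12)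
  else lab ((x + 4) / 5)
  termination_by x
  decreasing_by omega

lemma lab_le (x : ℕ) : lab x ≤ 10 := by
  induction x using Nat.strong_induction_on with
  | _ x ih =>
    rw [lab]
    split
    · exact wv_le _
    · exact ih _ (by omega)

lemma mb_mono : ∀ i < 13, ∀ j < 13, i ≤ j → mb i ≤ mb j := by decide

lemma lab_eq (x k : ℕ) (h1 : b k < x) (h2 : x ≤ b (k+1)) : lab x = wv k := by
  induction x using Nat.strong_induction_on generalizing k with
  | _ x ih =>
    rcases le_or_gt x 100 with hx | hx
    · -- base case : k < 12
      have hk12 : k < 12 := by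
        by_contra hc
        push_neg at hc
        have : b 12 ≤ b k := b_mono.monotone hc
        have h100 : b 12 = 100 := by decide
        omega
      have hbk : b k = mb k := b_eq_mb k (by omega)
      have hbk1 : b (k+1) = mb (k+1) := b_eq_mb (k+1) (by omega)
      rw [lab]
      rw [dif_pos hx]
      congr 1
      have hfg : Nat.findGreatest (fun k => mb k < x) 12 = k := by
        have hle : k ≤ Nat.findGreatest (fun k => mb k < x) 12 :=
          Nat.le_findGreatest (by omega) (by omega)
        have hge : Nat.findGreatest (fun k => mb k < x) 12 ≤ k := by
          by_contra hc
          push_neg at hc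
          have hsp : mb (Nat.findGreatest (fun k => mb k < x) 12) < x :=
            Nat.findGreatest_spec (P := fun k => mb k < x) (m := k) (n := 12) (by omega) (by omega)
          have hfg12 : Nat.findGreatest (fun k => mb k < x) 12 ≤ 12 :=
            Nat.findGreatest_le 12
          have : mb (k+1) ≤ mb (Nat.findGreatest (fun k => mb k < x) 12) :=
            mb_mono (k+1) (by omega) _ (by omega) (by omega)
          omega
        omega
      rw [hfg]
    · -- recursive case
      have hk : 12 ≤ k := by
        by_contra hc
        push_neg at hc
        have : b (k+1) ≤ b 12 := b_mono.monotone (by omega)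
        have h100 : b 12 = 100 := by decide
        omega
      obtain ⟨k', rfl⟩ : ∃ k', k = k' + 12 := ⟨k - 12, by omega⟩
      have hb1 : b (k' + 12) = 5 * b k' := b_add12 k'
      have hb2 : b (k' + 12 + 1) = 5 * b (k' + 1) := by
        rw [show k' + 12 + 1 = (k' + 1) + 12 by ring, b_add12]
      rw [lab, dif_neg (by omega)]
      have hlt : b k' < (x + 4) / 5 := by omega
      have hle : (x + 4) / 5 ≤ b (k' + 1) := by omega
      rw [ih _ (by omega) k' hlt hle, wv_add12]

/-- The graph -/
def G : SimpleGraph ℕ where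
  Adj x y := (x < y ∧ lab x < lab y) ∨ (y < x ∧ lab y < lab x)
  symm := by
    constructor
    intro x y h
    rcases h with h | h
    · exact Or.inr h
    · exact Or.inl h
  loopless := by
    constructor
    intro x h
    rcases h with h | h <;> omega

lemma noPath : ¬ HasIncPath G 11 := by
  rintro ⟨f, -, hmono, hadj⟩
  have key : ∀ i : ℕ, (h : i < 12) → i ≤ lab (f ⟨i, h⟩) := by
    intro i
    induction i with
    | zero => intro h; exact Nat.zero_le _
    | succ n ihn =>
      intro h
      have hn : n < 12 := by omega
      have hn11 : n < 11 := by omega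
      have adj := hadj ⟨n, hn11⟩
      have hcs : (⟨n, hn11⟩ : Fin 11).castSucc = (⟨n, hn⟩ : Fin 12) := rfl
      have hsc : (⟨n, hn11⟩ : Fin 11).succ = (⟨n+1, h⟩ : Fin 12) := rfl
      rw [hcs, hsc] at adj
      have hlt : f ⟨n, hn⟩ < f ⟨n+1, h⟩ := hmono (by simp [Fin.lt_def])
      have hlab : lab (f ⟨n, hn⟩) < lab (f ⟨n+1, h⟩) := by
        rcases adj with ⟨_, hl⟩ | ⟨hgt, _⟩
        · exact hl
        · omega
      have := ihn hn
      omega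
  have h11 := key 11 (by norm_num)
  have := lab_le (f ⟨11, by norm_num⟩)
  omega

/-- Edge finset -/
def E (n : ℕ) : Finset (ℕ × ℕ) :=
  (Finset.Icc 1 n ×ˢ Finset.Icc 1 n).filter (fun p => p.1 < p.2 ∧ lab p.1 < lab p.2)

lemma edgeCount_eq (n : ℕ) : edgeCount G n = (E n).card := by
  unfold edgeCount
  have hset : {p : ℕ × ℕ | 1 ≤ p.1 ∧ p.1 < p.2 ∧ p.2 ≤ n ∧ G.Adj p.1 p.2} = ↑(E n) := by
    ext ⟨x, y⟩
    simp only [Set.mem_setOf_eq, E, Finset.coe_filter, Finset.mem_product,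
      Finset.mem_coe, Finset.mem_Icc, Set.mem_setOf_eq]
    constructor
    · rintro ⟨h1, h2, h3, hadj⟩
      have hlab : lab x < lab y := by
        rcases hadj with ⟨_, hl⟩ | ⟨hgt, _⟩
        · exact hl
        · omega
      exact ⟨⟨⟨h1, by omega⟩, ⟨by omega, h3⟩⟩, h2, hlab⟩
    · rintro ⟨⟨⟨h1, h2⟩, ⟨h3, h4⟩⟩, h5, h6⟩
      exact ⟨h1, h5, h4, Or.inl ⟨h5, h6⟩⟩
  rw [hset, Set.ncard_coe_finset]

/-- index sets for the box counting -/
def idxF (j : ℕ) : Finset (ℕ × ℕ) :=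
  (Finset.range 48 ×ˢ Finset.range 48).filter
    (fun p => p.1 < p.2 ∧ p.2 < 36 + j ∧ wv p.1 < wv p.2)

def idxP (j : ℕ) : Finset ℕ :=
  (Finset.range (36 + j)).filter (fun k => wv k < wv (36 + j))

def Aval (j : ℕ) : ℕ := (idxF j).sum (fun p => (b (p.1+1) - b p.1) * (b (p.2+1) - b p.2))
def Bval (j : ℕ) : ℕ := (idxP j).sum (fun k => (b (k+1) - b k))

lemma prod_disj_left {s1 s2 t1 t2 : Finset ℕ} (h : Disjoint s1 s2) :
    Disjoint (s1 ×ˢ t1) (s2 ×ˢ t2) := by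
  rw [Finset.disjoint_left] at *
  intro p hp hq
  rw [Finset.mem_product] at hp hq
  exact h hp.1 hq.1

lemma prod_disj_right {s1 s2 t1 t2 : Finset ℕ} (h : Disjoint t1 t2) :
    Disjoint (s1 ×ˢ t1) (s2 ×ˢ t2) := by
  rw [Finset.disjoint_left] at *
  intro p hp hq
  rw [Finset.mem_product] at hp hq
  exact h hp.2 hq.2

lemma count_lemma (σ j n : ℕ) (hj : j < 12)
    (h1 : b (12*σ + 36 + j) < n) (h2 : n ≤ b (12*σ + 36 + j + 1)) :
    Aval j * (5^σ * 5^σ) + Bval j * (5^σ * (n - b (12*σ + 36 + j))) ≤ (E n).card := by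
  classical
  set K := 36 + j with hK
  have e1 : 12*σ + 36 + j = 12*σ + K := by omega
  have e2 : 12*σ + 36 + j + 1 = 12*σ + (K+1) := by omega
  rw [e1] at h1 ⊢
  rw [e2] at h2
  set seg : ℕ → Finset ℕ := fun k => Finset.Ioc (b (12*σ + k)) (b (12*σ + (k+1))) with hseg
  set par : Finset ℕ := Finset.Ioc (b (12*σ + K)) n with hpar
  have segmem : ∀ k x, x ∈ seg k ↔ (b (12*σ + k) < x ∧ x ≤ b (12*σ + (k+1))) := by
    intro k x; rw [hseg]; exact Finset.mem_Ioc
  have segcard : ∀ k, (seg k).card = (b (k+1) - b k) * 5^σ := by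
    intro k
    rw [hseg]
    simp only [Nat.card_Ioc]
    rw [add_comm (12*σ) k, add_comm (12*σ) (k+1), b_shift, b_shift, ← Nat.sub_mul]
  have parcard : par.card = n - b (12*σ + K) := by rw [hpar]; exact Nat.card_Ioc _ _
  have segdisj : ∀ k l, k < l → Disjoint (seg k) (seg l) := by
    intro k l hkl
    rw [Finset.disjoint_left]
    intro x hx hy
    rw [segmem] at hx hy
    have : b (12*σ + (k+1)) ≤ b (12*σ + l) := b_mono.monotone (by omega)
    omega
  have labseg : ∀ k x, x ∈ seg k → lab x = wv k := by
    intro k x hx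
    rw [segmem] at hx
    have h' : x ≤ b ((12*σ + k) + 1) := by
      rw [show (12*σ + k) + 1 = 12*σ + (k+1) by omega]; exact hx.2
    have := lab_eq x (12*σ + k) hx.1 h'
    rwa [add_comm (12*σ) k, wv_addmul12] at this
  have labpar : ∀ x, x ∈ par → lab x = wv K := by
    intro x hx
    rw [hpar, Finset.mem_Ioc] at hx
    have h' : x ≤ b ((12*σ + K) + 1) := by
      rw [show (12*σ + K) + 1 = 12*σ + (K+1) by omega]; omega
    have := lab_eq x (12*σ + K) hx.1 h'
    rwa [add_comm (12*σ) K, wv_addmul12] at this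
  have memF : ∀ p ∈ idxF j, p.1 < p.2 ∧ p.2 < K ∧ wv p.1 < wv p.2 := by
    intro p hp
    simp only [idxF, Finset.mem_filter, Finset.mem_product, Finset.mem_range] at hp
    exact ⟨hp.2.1, hp.2.2.1, hp.2.2.2⟩
  have memP : ∀ k ∈ idxP j, k < K ∧ wv k < wv K := by
    intro k hk
    simp only [idxP, Finset.mem_filter, Finset.mem_range] at hk
    exact ⟨hk.1, hk.2⟩
  set U1 : Finset (ℕ × ℕ) := (idxF j).biUnion (fun p => seg p.1 ×ˢ seg p.2) with hU1
  set U2 : Finset (ℕ × ℕ) := (idxP j).biUnion (fun k => seg k ×ˢ par) with hU2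
  have memEn : ∀ p : ℕ × ℕ, 1 ≤ p.1 → p.1 < p.2 → p.2 ≤ n → lab p.1 < lab p.2 → p ∈ E n := by
    intro p hx hxy hyn hlab
    simp only [E, Finset.mem_filter, Finset.mem_product, Finset.mem_Icc]
    exact ⟨⟨⟨hx, by omega⟩, ⟨by omega, hyn⟩⟩, hxy, hlab⟩
  have hsub1 : U1 ⊆ E n := by
    intro p hp
    rw [hU1, Finset.mem_biUnion] at hp
    obtain ⟨q, hq, hpq⟩ := hp
    obtain ⟨hq1, hq2, hq3⟩ := memF q hq
    rw [Finset.mem_product] at hpq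
    obtain ⟨hx, hy⟩ := hpq
    have hlx := labseg _ _ hx
    have hly := labseg _ _ hy
    rw [segmem] at hx hy
    have hb1 : b (12*σ + (q.1+1)) ≤ b (12*σ + q.2) := b_mono.monotone (by omega)
    have hb2 : b (12*σ + (q.2+1)) ≤ b (12*σ + K) := b_mono.monotone (by omega)
    have h20 := b_ge20 (12*σ + q.1)
    exact memEn p (by omega) (by omega) (by omega) (by rw [hlx, hly]; exact hq3)
  have hsub2 : U2 ⊆ E n := by
    intro p hp
    rw [hU2, Finset.mem_biUnion] at hp
    obtain ⟨k, hk, hpk⟩ := hp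
    obtain ⟨hk1, hk2⟩ := memP k hk
    rw [Finset.mem_product] at hpk
    obtain ⟨hx, hy⟩ := hpk
    have hlx := labseg _ _ hx
    have hly := labpar _ hy
    rw [segmem] at hx
    rw [hpar, Finset.mem_Ioc] at hy
    have hb1 : b (12*σ + (k+1)) ≤ b (12*σ + K) := b_mono.monotone (by omega)
    have h20 := b_ge20 (12*σ + k)
    exact memEn p (by omega) (by omega) (by omega) (by rw [hlx, hly]; exact hk2)
  have hdisj : Disjoint U1 U2 := by
    rw [Finset.disjoint_left]
    intro p hp hq
    rw [hU1, Finset.mem_biUnion] at hp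
    rw [hU2, Finset.mem_biUnion] at hq
    obtain ⟨q, hqmem, hpq⟩ := hp
    obtain ⟨k, hkmem, hpk⟩ := hq
    obtain ⟨-, hq2, -⟩ := memF q hqmem
    rw [Finset.mem_product] at hpq hpk
    have hy1 := (segmem _ _).mp hpq.2
    have hy2 := hpk.2
    rw [hpar, Finset.mem_Ioc] at hy2
    have : b (12*σ + (q.2+1)) ≤ b (12*σ + K) := b_mono.monotone (by omega)
    omega
  have hdisjF : ∀ q ∈ idxF j, ∀ q' ∈ idxF j, q ≠ q' →
      Disjoint (seg q.1 ×ˢ seg q.2) (seg q'.1 ×ˢ seg q'.2) := by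
    intro q _ q' _ hne
    rcases Nat.lt_trichotomy q.1 q'.1 with h | h | h
    · exact prod_disj_left (segdisj _ _ h)
    · rcases Nat.lt_trichotomy q.2 q'.2 with h' | h' | h'
      · exact prod_disj_right (segdisj _ _ h')
      · exact absurd (Prod.ext h h') hne
      · exact prod_disj_right (segdisj _ _ h').symm
    · exact prod_disj_left (segdisj _ _ h).symm
  have hdisjP : ∀ k ∈ idxP j, ∀ k' ∈ idxP j, k ≠ k' →
      Disjoint (seg k ×ˢ par) (seg k' ×ˢ par) := by
    intro k _ k' _ hne
    rcases Nat.lt_trichotomy k k' with h | h | h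
    · exact prod_disj_left (segdisj _ _ h)
    · exact absurd h hne
    · exact prod_disj_left (segdisj _ _ h).symm
  have hcard1 : U1.card = Aval j * (5^σ * 5^σ) := by
    rw [hU1, Finset.card_biUnion hdisjF]
    have : ∀ q ∈ idxF j, (seg q.1 ×ˢ seg q.2).card
        = ((b (q.1+1) - b q.1) * (b (q.2+1) - b q.2)) * (5^σ * 5^σ) := by
      intro q _
      rw [Finset.card_product, segcard, segcard, mul_mul_mul_comm]
    rw [Finset.sum_congr rfl this, ← Finset.sum_mul]
    rfl
  have hcard2 : U2.card = Bval j * (5^σ * (n - b (12*σ + K))) := by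
    rw [hU2, Finset.card_biUnion hdisjP]
    have : ∀ k ∈ idxP j, (seg k ×ˢ par).card
        = (b (k+1) - b k) * (5^σ * (n - b (12*σ + K))) := by
      intro k _
      rw [Finset.card_product, segcard, parcard, mul_assoc]
    rw [Finset.sum_congr rfl this, ← Finset.sum_mul]
    rfl
  calc Aval j * (5^σ * 5^σ) + Bval j * (5^σ * (n - b (12*σ + K)))
      = (U1 ∪ U2).card := by
        rw [Finset.card_union_of_disjoint hdisj, hcard1, hcard2]
    _ ≤ (E n).card := Finset.card_le_card (Finset.union_subset hsub1 hsub2)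

lemma quad_ineq (A B m D P t : ℤ) (hP : 0 ≤ P) (ht : 0 ≤ t) (htD : t ≤ D*P) (hD : 0 < D)
    (E1 : 18033*m^2 ≤ 79202*A) (E2 : 18033*(m+D)^2 ≤ 79202*(A+B*D)) :
    18033*(m*P+t)^2 ≤ 79202*(A*(P*P) + B*(P*t)) := by
  have t1 : 0 ≤ (D*P-t)*P*(79202*A-18033*m^2) :=
    mul_nonneg (mul_nonneg (by linarith) hP) (by linarith)
  have t2 : 0 ≤ t*P*(79202*(A+B*D)-18033*(m+D)^2) :=
    mul_nonneg (mul_nonneg ht hP) (by linarith)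
  have t3 : 0 ≤ 18033*t*(D*P-t)*D :=
    mul_nonneg (mul_nonneg (mul_nonneg (by norm_num) ht) (by linarith)) (by linarith)
  have key : D*(79202*(A*(P*P) + B*(P*t)) - 18033*(m*P+t)^2)
      = (D*P-t)*P*(79202*A-18033*m^2) + t*P*(79202*(A+B*D)-18033*(m+D)^2)
        + 18033*t*(D*P-t)*D := by ring
  have h0 : 0 ≤ D*(79202*(A*(P*P) + B*(P*t)) - 18033*(m*P+t)^2) := by
    rw [key]; linarith
  nlinarith [h0, hD]

lemma final_step (Av Bv m m' P t n : ℕ)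
    (hE1 : 18033*m^2 ≤ 79202*Av)
    (hE2 : 18033*m'^2 ≤ 79202*(Av + Bv*(m'-m)))
    (hm : m < m') (hn : n = m*P + t) (ht1 : 1 ≤ t) (ht2 : t ≤ (m'-m)*P) :
    18033*n^2 ≤ 79202*(Av*(P*P) + Bv*(P*t)) := by
  have hcast : (18033:ℤ)*((m:ℤ)*P + t)^2 ≤ 79202*((Av:ℤ)*(P*P) + Bv*(P*t)) := by
    apply quad_ineq (A := (Av:ℤ)) (B := (Bv:ℤ)) (m := (m:ℤ)) (D := (m':ℤ) - m)
      (P := (P:ℤ)) (t := (t:ℤ))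
    · positivity
    · positivity
    · have := ht2
      zify [hm.le] at this
      linarith
    · have : (m:ℤ) < m' := by exact_mod_cast hm
      linarith
    · exact_mod_cast hE1
    · have h2 := hE2
      zify [hm.le] at h2
      have : (m:ℤ) + ((m':ℤ) - m) = m' := by ring
      rw [this]
      linarith
  have hn' : (n:ℤ) = (m:ℤ)*P + t := by exact_mod_cast hn
  have : (18033:ℤ)*(n:ℤ)^2 ≤ 79202*((Av:ℤ)*(P*P) + Bv*(P*t)) := by
    rw [hn']; exact hcast
  exact_mod_cast this

lemma endpoint1 : ∀ j < 12, 18033*(b (36+j))^2 ≤ 79202*Aval j := by decide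

lemma endpoint2 : ∀ j < 12,
    18033*(b (36+j+1))^2 ≤ 79202*(Aval j + Bval j*(b (36+j+1) - b (36+j))) := by decide

lemma main_bound (n : ℕ) (hn : 2500 < n) : 18033 * n^2 ≤ 79202 * (E n).card := by
  have h36 : b 36 = 2500 := by decide
  set κ := Nat.findGreatest (fun k => b k < n) n with hκ
  have h36n : 36 ≤ n := by omega
  have hP36 : b 36 < n := by omega
  have hc36 : 36 ≤ κ := Nat.le_findGreatest h36n hP36
  have hbκ : b κ < n := Nat.findGreatest_spec (P := fun k => b k < n) h36n hP36
  have hbκ1 : n ≤ b (κ+1) := by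
    by_contra hc
    push_neg at hc
    have hle : κ + 1 ≤ n := le_trans (b_ge_id (κ+1)) (le_of_lt hc)
    exact Nat.findGreatest_is_greatest (P := fun k => b k < n) (by omega) hle hc
  obtain ⟨σ, j, hj, hκeq⟩ : ∃ σ j, j < 12 ∧ κ = 12*σ + 36 + j :=
    ⟨(κ-36)/12, (κ-36)%12, by omega, by omega⟩
  rw [hκeq] at hbκ hbκ1
  have hcount := count_lemma σ j n hj hbκ hbκ1
  have hbs : b (12*σ + 36 + j) = b (36+j) * 5^σ := by
    rw [show 12*σ + 36 + j = (36+j) + 12*σ by omega, b_shift]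
  have hbs1 : b (12*σ + 36 + j + 1) = b (36+j+1) * 5^σ := by
    rw [show 12*σ + 36 + j + 1 = (36+j+1) + 12*σ by omega, b_shift]
  set t := n - b (12*σ + 36 + j) with ht
  have hmm' : b (36+j) < b (36+j+1) := b_lt_succ (36+j)
  have hnt : n = b (36+j) * 5^σ + t := by omega
  have ht1 : 1 ≤ t := by omega
  have ht2 : t ≤ (b (36+j+1) - b (36+j)) * 5^σ := by
    have h5 : b (36+j+1) * 5^σ - b (36+j) * 5^σ = (b (36+j+1) - b (36+j)) * 5^σ := by
      rw [Nat.sub_mul]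
    omega
  have hfin := final_step (Aval j) (Bval j) (b (36+j)) (b (36+j+1)) (5^σ) t n
    (endpoint1 j hj) (endpoint2 j hj) hmm' hnt ht1 ht2
  calc 18033 * n^2 ≤ 79202*(Aval j*(5^σ*5^σ) + Bval j*(5^σ*t)) := hfin
    _ ≤ 79202 * (E n).card := by
        have : Aval j*(5^σ*5^σ) + Bval j*(5^σ*t) ≤ (E n).card := hcount
        exact Nat.mul_le_mul_left _ this

end IncPathConstruction

theorem exists_I11_free_graph_with_large_liminf :
    ∃ G : SimpleGraph ℕ, ¬ HasIncPath G 11 ∧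
      (18033 / 79202 : ℝ) ≤
        liminf (fun n : ℕ => (edgeCount G n : ℝ) / n ^ 2) atTop := by
  refine ⟨IncPathConstruction.G, IncPathConstruction.noPath, ?_⟩
  have hev : ∀ᶠ (n : ℕ) in atTop,
      (18033 / 79202 : ℝ) ≤ (edgeCount IncPathConstruction.G n : ℝ) / n ^ 2 := by
    rw [eventually_atTop]
    refine ⟨2501, fun n hn => ?_⟩
    have h := IncPathConstruction.main_bound n (by omega)
    rw [IncPathConstruction.edgeCount_eq]
    have hn0 : (0:ℝ) < (n:ℝ)^2 := by
      have : (0:ℝ) < (n:ℝ) := by exact_mod_cast Nat.lt_of_lt_of_le (by norm_num) hn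
      positivity
    rw [div_le_div_iff₀ (by norm_num) hn0]
    calc (18033:ℝ) * (n:ℝ)^2 ≤ 79202 * ((IncPathConstruction.E n).card : ℝ) := by
          exact_mod_cast h
      _ = ((IncPathConstruction.E n).card : ℝ) * 79202 := by ring
  have hbdd : IsBoundedUnder (· ≤ ·) atTop
      (fun n : ℕ => (edgeCount IncPathConstruction.G n : ℝ) / n ^ 2) := by
    refine ⟨1, ?_⟩
    rw [eventually_map, eventually_atTop]
    refine ⟨1, fun n hn => ?_⟩
    rw [IncPathConstruction.edgeCount_eq]
    have hcard : (IncPathConstruction.E n).card ≤ n^2 := by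
      calc (IncPathConstruction.E n).card
          ≤ (Finset.Icc 1 n ×ˢ Finset.Icc 1 n).card := Finset.card_filter_le _ _
        _ = n^2 := by rw [Finset.card_product, Nat.card_Icc]; simp [sq]
    have hn0 : (0:ℝ) < (n:ℝ)^2 := by
      have : (0:ℝ) < (n:ℝ) := by exact_mod_cast hn
      positivity
    show ((IncPathConstruction.E n).card : ℝ) / (n:ℝ)^2 ≤ 1
    rw [div_le_one hn0]
    exact_mod_cast hcard
  exact le_liminf_of_le (hbdd.isCoboundedUnder_ge) hev
end
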